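/- arXiv:2410.11787 — 7 statements merged into one kernel-verified Lean document; each statement's English description precedes it below -/
import Mathlib

section
/- Let p, q : ℕ → ℕ be sequences such that p(n+1) − p(n) → +∞ and q(n+1) − q(n) → +∞ as n → ∞. Then there exist a probability space (X, μ), invertible measure-preserving transformations S, T of (X, μ), and a measurable set C ⊆ X such that the sequence of averages (1/N) · Σ_{n=1}^{N} μ(S^{p(n)} C ∩ T^{q(n)} C) does not converge as N → ∞. -/
open MeasureTheory Filter Topology ENNReal
open scoped Classical

/-! ### Auxiliary constructions for `divergent_averages` -/



abbrev XX : Type := ℤ → ZMod 2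

noncomputable instance : BorelSpace (ZMod 2) := ⟨borel_eq_top_of_discrete.symm⟩

noncomputable def mu : Measure XX := Measure.addHaarMeasure (⊤ : TopologicalSpace.PositiveCompacts XX)

instance : mu.IsAddHaarMeasure := Measure.isAddHaarMeasure_addHaarMeasure _

instance : IsProbabilityMeasure mu := ⟨by
  simpa [mu] using Measure.addHaarMeasure_self (K₀ := (⊤ : TopologicalSpace.PositiveCompacts XX))⟩

lemma zmod2_cases (a : ZMod 2) : a = 0 ∨ a = 1 := by revert a; decide

lemma meas_cell (w : ℤ) (i : ZMod 2) : MeasurableSet {x : XX | x w = i} :=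
  show MeasurableSet ((fun f : XX => f w) ⁻¹' {i}) from
    measurableSet_preimage (measurable_pi_apply w) (measurableSet_singleton i)

lemma mu_flip (w : ℤ) (i : ZMod 2) : mu {x : XX | x w = i + 1} = mu {x : XX | x w = i} := by
  have h := measure_preimage_add mu (Pi.single w (1 : ZMod 2)) {x : XX | x w = i + 1}
  rw [← h]
  congr 1
  ext x
  simp only [Set.mem_preimage, Set.mem_setOf_eq, Pi.add_apply, Pi.single_eq_same]
  constructor
  · intro hh
    rw [add_comm] at hh
    exact add_right_cancel hh
  · intro hh; rw [hh, add_comm]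

lemma mu_single (w : ℤ) (i : ZMod 2) : mu {x : XX | x w = i} = 1 / 2 := by
  have hflip : mu {x : XX | x w = i + 1} = mu {x : XX | x w = i} := mu_flip w i
  have hdisj : Disjoint {x : XX | x w = i} {x : XX | x w = i + 1} := by
    rw [Set.disjoint_left]
    intro x hx hx'
    simp only [Set.mem_setOf_eq] at hx hx'
    rw [hx] at hx'
    have : (1 : ZMod 2) ≠ 0 := by decide
    have := left_eq_add.mp hx'
    exact absurd this ‹(1:ZMod 2) ≠ 0›
  have hunion : {x : XX | x w = i} ∪ {x : XX | x w = i + 1} = Set.univ := by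
    ext x
    simp only [Set.mem_union, Set.mem_setOf_eq, Set.mem_univ, iff_true]
    rcases zmod2_cases (x w - i) with h | h
    · left; have := sub_eq_zero.mp h; exact this
    · right; have : x w = i + 1 := by linear_combination h
      exact this
  have hsum : mu {x : XX | x w = i} + mu {x : XX | x w = i + 1} = 1 := by
    rw [← measure_union hdisj (meas_cell w (i+1)), hunion]
    exact measure_univ
  rw [hflip] at hsum
  have h2 : (2 : ℝ≥0∞) * mu {x : XX | x w = i} = 1 := by rw [two_mul]; exact hsum
  have h3 : (2 : ℝ≥0∞) * (1 / 2) = 1 := by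
    rw [one_div, ENNReal.mul_inv_cancel (by norm_num) (by norm_num)]
  exact (ENNReal.mul_right_inj (a := 2) (by norm_num) (by norm_num)).mp (by rw [h2, h3])

lemma half_of_add (a b : ℝ≥0∞) (h : a + a = b) : a = b / 2 := by
  have h2 : b = 2 * a := by rw [two_mul, h]
  rw [h2, mul_comm, mul_div_assoc, ENNReal.div_self (by norm_num) (by norm_num), mul_one]

lemma mu_pair (w w' : ℤ) (hne : w ≠ w') :
    mu {x : XX | x w = 1 ∧ x w' = 1} = 1 / 4 := by
  have meas : ∀ j : ZMod 2, MeasurableSet {x : XX | x w = 1 ∧ x w' = j} := by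
    intro j
    have : {x : XX | x w = 1 ∧ x w' = j} = {x : XX | x w = 1} ∩ {x : XX | x w' = j} := rfl
    rw [this]
    exact (meas_cell w 1).inter (meas_cell w' j)
  have hflip : ∀ j : ZMod 2,
      mu {x : XX | x w = 1 ∧ x w' = j + 1} = mu {x : XX | x w = 1 ∧ x w' = j} := by
    intro j
    have h := measure_preimage_add mu (Pi.single w' (1 : ZMod 2))
      {x : XX | x w = 1 ∧ x w' = j + 1}
    rw [← h]
    congr 1
    ext x
    simp only [Set.mem_preimage, Set.mem_setOf_eq, Pi.add_apply, Pi.single_eq_same,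
      Pi.single_eq_of_ne hne, zero_add]
    constructor
    · rintro ⟨h1, h2⟩
      refine ⟨h1, ?_⟩
      rw [add_comm] at h2
      exact add_right_cancel h2
    · rintro ⟨h1, h2⟩
      exact ⟨h1, by rw [h2, add_comm]⟩
  have hdisj : Disjoint {x : XX | x w = 1 ∧ x w' = (0:ZMod 2)}
      {x : XX | x w = 1 ∧ x w' = (0:ZMod 2) + 1} := by
    rw [Set.disjoint_left]
    rintro x ⟨-, h0⟩ ⟨-, h1⟩
    rw [h0] at h1
    exact absurd h1.symm (by decide)
  have hunion : {x : XX | x w = 1 ∧ x w' = (0:ZMod 2)} ∪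
      {x : XX | x w = 1 ∧ x w' = (0:ZMod 2) + 1} = {x : XX | x w = 1} := by
    ext x
    simp only [Set.mem_union, Set.mem_setOf_eq, zero_add]
    rcases zmod2_cases (x w') with h | h
    · tauto
    · tauto
  have hsum : mu {x : XX | x w = 1 ∧ x w' = (0:ZMod 2)} +
      mu {x : XX | x w = 1 ∧ x w' = (0:ZMod 2) + 1} = 1 / 2 := by
    rw [← measure_union hdisj (meas ((0:ZMod 2)+1)), hunion]
    exact mu_single w 1
  rw [hflip 0] at hsum
  have h0 := half_of_add _ _ hsum
  have h1 : mu {x : XX | x w = 1 ∧ x w' = 1} = mu {x : XX | x w = 1 ∧ x w' = (0:ZMod 2)} := by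
    have := hflip 0
    simpa using this
  rw [h1, h0]
  rw [one_div, div_eq_mul_inv, ← ENNReal.mul_inv (by norm_num) (by norm_num), one_div]
  norm_num

/-- the measurable equiv of `XX` induced by precomposition with a permutation of `ℤ`. -/
def shiftME (e : ℤ ≃ ℤ) : XX ≃ᵐ XX where
  toFun x := x ∘ e
  invFun x := x ∘ e.symm
  left_inv x := by funext w; simp
  right_inv x := by funext w; simp
  measurable_toFun := measurable_pi_lambda _ fun w => measurable_pi_apply (e w)
  measurable_invFun := measurable_pi_lambda _ fun w => measurable_pi_apply (e.symm w)

lemma shiftME_mp (e : ℤ ≃ ℤ) : MeasurePreserving (shiftME e) mu mu := by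
  have hc : Continuous (fun x : XX => x ∘ e) := continuous_pi fun w => continuous_apply (e w)
  have hs : Function.Surjective (fun x : XX => x ∘ e) :=
    fun y => ⟨y ∘ e.symm, by funext w; simp⟩
  exact AddMonoidHom.measurePreserving
    (f := AddMonoidHom.mk' (fun x : XX => x ∘ e) (fun a b => rfl)) hc hs rfl

lemma shiftME_iter (e : ℤ ≃ ℤ) (a : ℕ) (x : XX) :
    (⇑(shiftME e))^[a] x = x ∘ (⇑e)^[a] := by
  induction a with
  | zero => rfl
  | succ a ih =>
    rw [Function.iterate_succ_apply', ih]
    funext w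
    show (x ∘ (⇑e)^[a]) (e w) = x ((⇑e)^[a+1] w)
    rw [Function.iterate_succ_apply]
    rfl

lemma shiftME_image (e : ℤ ≃ ℤ) (a : ℕ) (w₀ : ℤ) :
    (⇑(shiftME e))^[a] '' {x : XX | x w₀ = 1} = {y : XX | y ((⇑e.symm)^[a] w₀) = 1} := by
  have hl : Function.LeftInverse (⇑e.symm)^[a] (⇑e)^[a] :=
    Function.LeftInverse.iterate e.left_inv a
  have hr : Function.LeftInverse (⇑e)^[a] (⇑e.symm)^[a] :=
    Function.LeftInverse.iterate e.right_inv a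
  ext y
  constructor
  · rintro ⟨x, hx, rfl⟩
    rw [shiftME_iter]
    show x ((⇑e)^[a] ((⇑e.symm)^[a] w₀)) = 1
    rw [hr w₀]
    exact hx
  · intro hy
    refine ⟨y ∘ (⇑e.symm)^[a], hy, ?_⟩
    rw [shiftME_iter]
    funext w
    show y ((⇑e.symm)^[a] ((⇑e)^[a] w)) = y w
    rw [hl w]

/-- "+2 on even integers" permutation of ℤ. -/
def lineE : ℤ ≃ ℤ where
  toFun k := if Even k then k + 2 else k
  invFun k := if Even k then k - 2 else k
  left_inv k := by
    by_cases h : Even k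
    · have h2 : Even (k + 2) := by obtain ⟨m, rfl⟩ := h; exact ⟨m + 1, by ring⟩
      simp [h, h2]
    · simp [h]
  right_inv k := by
    by_cases h : Even k
    · have h2 : Even (k - 2) := by obtain ⟨m, rfl⟩ := h; exact ⟨m - 1, by ring⟩
      simp [h, h2]
    · simp [h]

lemma lineE_iter (a : ℕ) : (⇑lineE)^[a] 0 = 2 * (a : ℤ) := by
  induction a with
  | zero => simp
  | succ a ih =>
    rw [Function.iterate_succ_apply', ih]
    show (if Even (2 * (a:ℤ)) then 2*(a:ℤ) + 2 else 2*(a:ℤ)) = 2 * ((a:ℤ)+1)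
    simp [even_two_mul]
    ring

noncomputable def ofun (v : ℤ → ℤ) (x : ℤ) : ℤ :=
  if h : ∃ b, v b = x then v (h.choose + 1) else x

noncomputable def ifun (v : ℤ → ℤ) (x : ℤ) : ℤ :=
  if h : ∃ b, v b = x then v (h.choose - 1) else x

variable {v : ℤ → ℤ}

lemma ofun_v (hv : Function.Injective v) (b : ℤ) : ofun v (v b) = v (b + 1) := by
  unfold ofun
  have h1 : ∃ c, v c = v b := ⟨b, rfl⟩
  rw [dif_pos h1, hv h1.choose_spec]

lemma ifun_v (hv : Function.Injective v) (b : ℤ) : ifun v (v b) = v (b - 1) := by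
  unfold ifun
  have h1 : ∃ c, v c = v b := ⟨b, rfl⟩
  rw [dif_pos h1, hv h1.choose_spec]

lemma ofun_not {x : ℤ} (hx : ¬∃ b, v b = x) : ofun v x = x := by unfold ofun; exact dif_neg hx

lemma ifun_not {x : ℤ} (hx : ¬∃ b, v b = x) : ifun v x = x := by unfold ifun; exact dif_neg hx

/-- the permutation of ℤ following the injective path `v`. -/
noncomputable def orbitE (v : ℤ → ℤ) (hv : Function.Injective v) : ℤ ≃ ℤ where
  toFun := ofun v
  invFun := ifun v
  left_inv x := by
    by_cases h : ∃ b, v b = x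
    · obtain ⟨b, rfl⟩ := h
      rw [ofun_v hv, ifun_v hv]
      congr 1
      ring
    · rw [ofun_not h, ifun_not h]
  right_inv x := by
    by_cases h : ∃ b, v b = x
    · obtain ⟨b, rfl⟩ := h
      rw [ifun_v hv, ofun_v hv]
      congr 1
      ring
    · rw [ifun_not h, ofun_not h]

lemma orbitE_iter (hv : Function.Injective v) (hv0 : v 0 = 0) (a : ℕ) :
    (⇑(orbitE v hv))^[a] 0 = v a := by
  induction a with
  | zero => simpa using hv0.symm
  | succ a ih =>
    rw [Function.iterate_succ_apply', ih]
    show ofun v (v a) = v (a + 1 : ℕ)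
    rw [ofun_v hv]
    congr 1

noncomputable def uu (p q : ℕ → ℕ) (n₁ : ℕ) (b : ℤ) : ℤ :=
  if b = 0 then 0
  else if h : ∃ n : ℕ, n₁ ≤ n ∧ Odd (Nat.log 100 n) ∧ (q n : ℤ) = b then 2 * (p h.choose)
  else 2 * b + 1

section uuFacts

variable {p q : ℕ → ℕ} {n₁ : ℕ}
variable (hpinj : ∀ m n, n₁ ≤ m → n₁ ≤ n → p m = p n → m = n)
variable (hqinj : ∀ m n, n₁ ≤ m → n₁ ≤ n → q m = q n → m = n)
variable (hppos : ∀ n, n₁ ≤ n → 1 ≤ p n)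
variable (hqpos : ∀ n, n₁ ≤ n → 1 ≤ q n)

lemma uu_zero : uu p q n₁ 0 = 0 := if_pos rfl

lemma uu_cases (b : ℤ) :
    (b = 0 ∧ uu p q n₁ b = 0) ∨
    (∃ n, n₁ ≤ n ∧ Odd (Nat.log 100 n) ∧ (q n : ℤ) = b ∧ uu p q n₁ b = 2 * p n) ∨
    (b ≠ 0 ∧ uu p q n₁ b = 2 * b + 1) := by
  unfold uu
  by_cases h0 : b = 0
  · left; exact ⟨h0, if_pos h0⟩
  · rw [if_neg h0]
    by_cases h : ∃ n : ℕ, n₁ ≤ n ∧ Odd (Nat.log 100 n) ∧ (q n : ℤ) = b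
    · right; left
      exact ⟨h.choose, h.choose_spec.1, h.choose_spec.2.1, h.choose_spec.2.2, dif_pos h⟩
    · right; right
      exact ⟨h0, dif_neg h⟩

include hqinj hqpos in
lemma uu_odd {n : ℕ} (hn : n₁ ≤ n) (ho : Odd (Nat.log 100 n)) :
    uu p q n₁ ((q n : ℤ)) = 2 * p n := by
  have hb0 : ((q n : ℤ)) ≠ 0 := by
    have := hqpos n hn; exact_mod_cast by omega
  have h : ∃ m : ℕ, n₁ ≤ m ∧ Odd (Nat.log 100 m) ∧ (q m : ℤ) = (q n : ℤ) := ⟨n, hn, ho, rfl⟩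
  unfold uu
  rw [if_neg hb0, dif_pos h]
  have hm := h.choose_spec
  have : h.choose = n := hqinj _ _ hm.1 hn (by exact_mod_cast hm.2.2)
  rw [this]

include hqinj hqpos in
lemma uu_even {n : ℕ} (hn : n₁ ≤ n) (he : ¬ Odd (Nat.log 100 n)) :
    uu p q n₁ ((q n : ℤ)) = 2 * (q n : ℤ) + 1 := by
  have hb0 : ((q n : ℤ)) ≠ 0 := by
    have := hqpos n hn; exact_mod_cast by omega
  have h : ¬ ∃ m : ℕ, n₁ ≤ m ∧ Odd (Nat.log 100 m) ∧ (q m : ℤ) = (q n : ℤ) := by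
    rintro ⟨m, hm1, hm2, hm3⟩
    have : m = n := hqinj _ _ hm1 hn (by exact_mod_cast hm3)
    rw [this] at hm2
    exact he hm2
  unfold uu
  rw [if_neg hb0, dif_neg h]

include hpinj hppos in
lemma uu_inj : Function.Injective (uu p q n₁) := by
  intro b b' heq
  rcases uu_cases (p := p) (q := q) (n₁ := n₁) b with ⟨hb, hv⟩ | ⟨n, hn, _, hqn, hv⟩ | ⟨hb, hv⟩ <;>
    rcases uu_cases (p := p) (q := q) (n₁ := n₁) b' with ⟨hb', hv'⟩ | ⟨n', hn', _, hqn', hv'⟩ | ⟨hb', hv'⟩ <;>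
    rw [hv, hv'] at heq
  · rw [hb, hb']
  · have := hppos n' hn'; omega
  · omega
  · have := hppos n hn; omega
  · have hpp : (p n : ℤ) = (p n' : ℤ) := by omega
    have : n = n' := hpinj _ _ hn hn' (by exact_mod_cast hpp)
    rw [← hqn, ← hqn', this]
  · omega
  · omega
  · omega
  · omega

end uuFacts

lemma pow_big (k : ℕ) : 2*k + 1 < 100 ^ (2*k+1) := Nat.lt_pow_self (by norm_num)

lemma diverge_aux (a : ℕ → ℝ) (n₁ : ℕ)
    (h0 : ∀ n, 0 ≤ a n) (h1 : ∀ n, a n ≤ 1)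
    (hval : ∀ n, n₁ ≤ n → a n = if Odd (Nat.log 100 n) then (1/2:ℝ) else 1/4) :
    ¬ ∃ l : ℝ, Tendsto (fun N : ℕ => (1/(N:ℝ)) * ∑ n ∈ Finset.Icc 1 N, a n)
      atTop (𝓝 l) := by
  rintro ⟨l, hl⟩
  set A : ℕ → ℝ := fun N => (1/(N:ℝ)) * ∑ n ∈ Finset.Icc 1 N, a n with hA
  -- the two subsequences
  have t1 : Tendsto (fun k : ℕ => 100^(2*k+1) - 1) atTop atTop := by
    apply tendsto_atTop_mono (fun k => ?_) tendsto_id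
    have := pow_big k
    simp only [id]
    omega
  have t2 : Tendsto (fun k : ℕ => 100^(2*(k+1)) - 1) atTop atTop := by
    apply tendsto_atTop_mono (fun k => ?_) tendsto_id
    have := pow_big k
    have h2 : 100^(2*k+1) ≤ 100^(2*(k+1)) := Nat.pow_le_pow_right (by norm_num) (by omega)
    simp only [id]
    omega
  have hsub1 : Tendsto (fun k => A (100^(2*k+1) - 1)) atTop (𝓝 l) := hl.comp t1
  have hsub2 : Tendsto (fun k => A (100^(2*(k+1)) - 1)) atTop (𝓝 l) := hl.comp t2
  -- upper bound along N = 100^(2k+1) - 1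
  have hub : ∀ᶠ k in atTop, A (100^(2*k+1) - 1) ≤ 103/300 := by
    rw [eventually_atTop]
    refine ⟨n₁ + 1, fun k hk => ?_⟩
    set M : ℕ := 100^(2*k) with hM
    set N : ℕ := 100^(2*k+1) - 1 with hN
    have hkM : k < M := by
      calc k < 100^k := Nat.lt_pow_self (by norm_num)
      _ ≤ M := Nat.pow_le_pow_right (by norm_num) (by omega)
    have hn₁M : n₁ ≤ M := by omega
    have hM1 : 1 ≤ M := Nat.one_le_pow _ _ (by norm_num)
    have hN1 : (N:ℕ) + 1 = 100 * M := by
      have : 100^(2*k+1) = 100 * M := by rw [hM, pow_succ, mul_comm]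
      have hpos : 1 ≤ 100^(2*k+1) := Nat.one_le_pow _ _ (by norm_num)
      omega
    have hMN : M ≤ N + 1 := by omega
    -- split the sum
    have hIcc : Finset.Icc 1 N = Finset.Ico 1 (N+1) := (Finset.Ico_add_one_right_eq_Icc 1 N).symm
    have hsplit : ∑ n ∈ Finset.Ico 1 M, a n + ∑ n ∈ Finset.Ico M (N+1), a n
        = ∑ n ∈ Finset.Ico 1 (N+1), a n :=
      Finset.sum_Ico_consecutive _ (by omega) hMN
    have hb1 : ∑ n ∈ Finset.Ico 1 M, a n ≤ (M : ℝ) := by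
      calc ∑ n ∈ Finset.Ico 1 M, a n ≤ (Finset.Ico 1 M).card • (1:ℝ) :=
            Finset.sum_le_card_nsmul _ _ _ (fun i _ => h1 i)
      _ = ((M - 1 : ℕ) : ℝ) := by rw [Nat.card_Ico, nsmul_eq_mul, mul_one]
      _ ≤ (M : ℝ) := by exact_mod_cast Nat.cast_le.mpr (Nat.sub_le M 1)
    have hb2 : ∑ n ∈ Finset.Ico M (N+1), a n ≤ ((99 * M : ℕ) : ℝ) * (1/4) := by
      have hcard : (Finset.Ico M (N+1)).card = 99 * M := by
        rw [Nat.card_Ico]; omega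
      calc ∑ n ∈ Finset.Ico M (N+1), a n
          ≤ (Finset.Ico M (N+1)).card • ((1:ℝ)/4) := by
            apply Finset.sum_le_card_nsmul
            intro n hn
            rw [Finset.mem_Ico] at hn
            have hlog : Nat.log 100 n = 2*k :=
              Nat.log_eq_of_pow_le_of_lt_pow hn.1 (by omega)
            rw [hval n (by omega), hlog]
            have : ¬ Odd (2*k) := by simp [Nat.odd_iff]
            rw [if_neg this]
      _ = ((99 * M : ℕ) : ℝ) * (1/4) := by rw [hcard, nsmul_eq_mul]
    have hNpos : 0 < (N:ℝ) := by
      have : 99 ≤ N := by omega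
      exact_mod_cast by omega
    have hsum : ∑ n ∈ Finset.Icc 1 N, a n ≤ (M:ℝ) + ((99 * M : ℕ) : ℝ) * (1/4) := by
      rw [hIcc, ← hsplit]
      linarith
    show (1/(N:ℝ)) * ∑ n ∈ Finset.Icc 1 N, a n ≤ 103/300
    rw [one_div, inv_mul_le_iff₀ hNpos]
    have hcast : ((N:ℕ):ℝ) = 100 * (M:ℝ) - 1 := by
      have h2 : ((N:ℝ) + 1) = 100 * (M:ℝ) := by exact_mod_cast hN1
      linarith
    have hMR : (1:ℝ) ≤ (M:ℝ) := by exact_mod_cast hM1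
    rw [hcast]
    push_cast at hsum
    linarith
  -- lower bound along N = 100^(2k+2) - 1
  have hlb : ∀ᶠ k in atTop, 99/200 ≤ A (100^(2*(k+1)) - 1) := by
    rw [eventually_atTop]
    refine ⟨n₁ + 1, fun k hk => ?_⟩
    set M : ℕ := 100^(2*k+1) with hM
    set N : ℕ := 100^(2*(k+1)) - 1 with hN
    have hkM : k < M := by
      calc k < 100^k := Nat.lt_pow_self (by norm_num)
      _ ≤ M := Nat.pow_le_pow_right (by norm_num) (by omega)
    have hn₁M : n₁ ≤ M := by omega
    have hM1 : 1 ≤ M := Nat.one_le_pow _ _ (by norm_num)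
    have hN1 : (N:ℕ) + 1 = 100 * M := by
      have h : 100^(2*(k+1)) = 100 * M := by
        rw [hM]
        have : 2*(k+1) = (2*k+1) + 1 := by ring
        rw [this, pow_succ, mul_comm]
      have hpos : 1 ≤ 100^(2*(k+1)) := Nat.one_le_pow _ _ (by norm_num)
      omega
    have hMN : M ≤ N + 1 := by omega
    have hIcc : Finset.Icc 1 N = Finset.Ico 1 (N+1) := (Finset.Ico_add_one_right_eq_Icc 1 N).symm
    have hval' : ∀ n ∈ Finset.Ico M (N+1), a n = 1/2 := by
      intro n hn
      rw [Finset.mem_Ico] at hn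
      have hlog : Nat.log 100 n = 2*k+1 :=
        Nat.log_eq_of_pow_le_of_lt_pow hn.1 (by omega)
      rw [hval n (by omega), hlog, if_pos ⟨k, by ring⟩]
    have hblock : ∑ n ∈ Finset.Ico M (N+1), a n = ((99 * M : ℕ) : ℝ) * (1/2) := by
      rw [Finset.sum_congr rfl hval', Finset.sum_const, Nat.card_Ico, nsmul_eq_mul]
      have h3 : N + 1 - M = 99 * M := by omega
      rw [h3]
    have hmono : ∑ n ∈ Finset.Ico M (N+1), a n ≤ ∑ n ∈ Finset.Ico 1 (N+1), a n := by
      apply Finset.sum_le_sum_of_subset_of_nonneg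
      · apply Finset.Ico_subset_Ico (by omega) le_rfl
      · exact fun i _ _ => h0 i
    have hNpos : 0 < (N:ℝ) := by
      have : 99 ≤ N := by omega
      exact_mod_cast by omega
    show 99/200 ≤ (1/(N:ℝ)) * ∑ n ∈ Finset.Icc 1 N, a n
    rw [one_div, le_inv_mul_iff₀ hNpos]
    have hcast : ((N:ℕ):ℝ) = 100 * (M:ℝ) - 1 := by
      have h2 : ((N:ℝ) + 1) = 100 * (M:ℝ) := by exact_mod_cast hN1
      linarith
    have hMR : (1:ℝ) ≤ (M:ℝ) := by exact_mod_cast hM1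
    have htot : ((99 * M : ℕ) : ℝ) * (1/2) ≤ ∑ n ∈ Finset.Ico 1 (N+1), a n := by
      rw [← hblock]
      exact hmono
    rw [hIcc, hcast]
    push_cast at htot ⊢
    linarith
  have hle : l ≤ 103/300 := le_of_tendsto hsub1 hub
  have hge : 99/200 ≤ l := ge_of_tendsto hsub2 hlb
  linarith



/-- If `p(n+1) - p(n) → ∞` and `q(n+1) - q(n) → ∞`, there exist a probability space,
invertible measure-preserving transformations `S, T` and a measurable set `C` such that the
Cesàro averages of `μ(S^{p(n)} C ∩ T^{q(n)} C)` do not converge. -/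
theorem divergent_averages (p q : ℕ → ℕ)
    (hp : Tendsto (fun n => (p (n + 1) : ℤ) - (p n : ℤ)) atTop atTop)
    (hq : Tendsto (fun n => (q (n + 1) : ℤ) - (q n : ℤ)) atTop atTop) :
    ∃ (X : Type) (_ : MeasurableSpace X) (μ : Measure X), IsProbabilityMeasure μ ∧
      ∃ (S T : X ≃ᵐ X), MeasurePreserving S μ μ ∧ MeasurePreserving T μ μ ∧
        ∃ C : Set X, MeasurableSet C ∧
          ¬ ∃ l : ℝ, Tendsto
            (fun N : ℕ => (1 / (N : ℝ)) *
              ∑ n ∈ Finset.Icc 1 N, (μ ((⇑S)^[p n] '' C ∩ (⇑T)^[q n] '' C)).toReal)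
            atTop (𝓝 l) := by
  -- extract an index `n₁` past which `p` and `q` are strictly monotone (hence injective)
  obtain ⟨N₁, hN₁⟩ := Filter.eventually_atTop.mp (hp.eventually_ge_atTop 1)
  obtain ⟨N₂, hN₂⟩ := Filter.eventually_atTop.mp (hq.eventually_ge_atTop 1)
  set n₀ := max N₁ N₂ with hn₀
  have hpstep : ∀ n, n₀ ≤ n → p n < p (n + 1) := by
    intro n hn
    have := hN₁ n (le_trans (le_max_left _ _) hn)
    omega
  have hqstep : ∀ n, n₀ ≤ n → q n < q (n + 1) := by
    intro n hn
    have := hN₂ n (le_trans (le_max_right _ _) hn)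
    omega
  have hpm : ∀ m k, n₀ ≤ m → p m < p (m + k + 1) := by
    intro m k hm
    induction k with
    | zero => simpa using hpstep m hm
    | succ k ih =>
      have h2 : m + (k + 1) + 1 = (m + k + 1) + 1 := by ring
      rw [h2]
      exact lt_trans ih (hpstep (m + k + 1) (by omega))
  have hqm : ∀ m k, n₀ ≤ m → q m < q (m + k + 1) := by
    intro m k hm
    induction k with
    | zero => simpa using hqstep m hm
    | succ k ih =>
      have h2 : m + (k + 1) + 1 = (m + k + 1) + 1 := by ring
      rw [h2]
      exact lt_trans ih (hqstep (m + k + 1) (by omega))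
  set n₁ := n₀ + 1 with hn₁
  have hplt : ∀ m n, n₀ ≤ m → m < n → p m < p n := by
    intro m n hm hlt
    have h := hpm m (n - m - 1) hm
    have h2 : m + (n - m - 1) + 1 = n := by omega
    rwa [h2] at h
  have hqlt : ∀ m n, n₀ ≤ m → m < n → q m < q n := by
    intro m n hm hlt
    have h := hqm m (n - m - 1) hm
    have h2 : m + (n - m - 1) + 1 = n := by omega
    rwa [h2] at h
  have hppos : ∀ n, n₁ ≤ n → 1 ≤ p n := by
    intro n hn
    have := hplt n₀ n le_rfl (by omega)
    omega
  have hqpos : ∀ n, n₁ ≤ n → 1 ≤ q n := by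
    intro n hn
    have := hqlt n₀ n le_rfl (by omega)
    omega
  have hpinj : ∀ m n, n₁ ≤ m → n₁ ≤ n → p m = p n → m = n := by
    intro m n hm hn he
    by_contra hne
    rcases Nat.lt_or_ge m n with h | h
    · have := hplt m n (by omega) h; omega
    · have := hplt n m (by omega) (by omega); omega
  have hqinj : ∀ m n, n₁ ≤ m → n₁ ≤ n → q m = q n → m = n := by
    intro m n hm hn he
    by_contra hne
    rcases Nat.lt_or_ge m n with h | h
    · have := hqlt m n (by omega) h; omega
    · have := hqlt n m (by omega) (by omega); omega
  -- the dynamical system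
  have hvinj : Function.Injective (uu p q n₁) := uu_inj hpinj hppos
  refine ⟨XX, inferInstance, mu, inferInstance,
    shiftME lineE.symm, shiftME (orbitE (uu p q n₁) hvinj).symm,
    shiftME_mp _, shiftME_mp _, {x : XX | x 0 = 1}, meas_cell 0 1, ?_⟩
  apply diverge_aux _ n₁
  · intro n
    exact ENNReal.toReal_nonneg
  · intro n
    have h1 : mu ((⇑(shiftME lineE.symm))^[p n] '' {x : XX | x 0 = 1} ∩
        (⇑(shiftME (orbitE (uu p q n₁) hvinj).symm))^[q n] '' {x : XX | x 0 = 1}) ≤ 1 :=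
      prob_le_one
    have := ENNReal.toReal_mono ENNReal.one_ne_top h1
    simpa using this
  · intro n hn
    have hS : (⇑(shiftME lineE.symm))^[p n] '' {x : XX | x 0 = 1}
        = {y : XX | y (2 * (p n : ℤ)) = 1} := by
      rw [shiftME_image]
      simp only [Equiv.symm_symm]
      rw [lineE_iter]
    have hT : (⇑(shiftME (orbitE (uu p q n₁) hvinj).symm))^[q n] '' {x : XX | x 0 = 1}
        = {y : XX | y (uu p q n₁ ((q n : ℤ))) = 1} := by
      rw [shiftME_image]
      simp only [Equiv.symm_symm]
      rw [orbitE_iter hvinj uu_zero]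
    rw [hS, hT]
    by_cases ho : Odd (Nat.log 100 n)
    · rw [if_pos ho, uu_odd hqinj hqpos hn ho, Set.inter_self, mu_single]
      simp [ENNReal.toReal_div]
    · rw [if_neg ho, uu_even hqinj hqpos hn ho]
      have hne : (2 * (p n : ℤ)) ≠ 2 * (q n : ℤ) + 1 := by omega
      have hset : {y : XX | y (2 * (p n : ℤ)) = 1} ∩ {y : XX | y (2 * (q n : ℤ) + 1) = 1}
          = {y : XX | y (2 * (p n : ℤ)) = 1 ∧ y (2 * (q n : ℤ) + 1) = 1} := rfl
      rw [hset, mu_pair _ _ hne]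
      simp [ENNReal.toReal_div]
end

section
/- Let p, q : ℕ → ℕ be sequences such that p(n+1) − p(n) → +∞ and q(n+1) − q(n) → +∞ as n → ∞. Then there exist a probability space (X, μ), invertible measure-preserving transformations S, T of (X, μ), a measurable set C ⊆ X with 0 < μ(C) < 1, and strictly increasing sequences (N_k), (M_k) of positive integers tending to infinity, such that (1/N_k) · Σ_{n=1}^{N_k} μ(S^{p(n)} C ∩ T^{q(n)} C) → μ(C) and (1/M_k) · Σ_{n=1}^{M_k} μ(S^{p(n)} C ∩ T^{q(n)} C) → μ(C)² as k → ∞. In particular, since μ(C) ≠ μ(C)², the full sequence of averages diverges. -/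
open MeasureTheory Filter Topology

open MeasureTheory Filter Topology

noncomputable section
namespace DAT
instance : TopologicalSpace (ZMod 2) := ⊥
instance : DiscreteTopology (ZMod 2) := ⟨rfl⟩
abbrev Xsp : Type := (ℤ ⊕ ℤ) → ZMod 2
def μH : Measure Xsp := Measure.addHaarMeasure (⊤ : TopologicalSpace.PositiveCompacts Xsp)
instance : μH.IsAddHaarMeasure :=
  Measure.isAddHaarMeasure_addHaarMeasure (⊤ : TopologicalSpace.PositiveCompacts Xsp)
instance : IsProbabilityMeasure μH := ⟨by
  simpa [μH] using Measure.addHaarMeasure_self (K₀ := (⊤ : TopologicalSpace.PositiveCompacts Xsp))⟩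

/-- the measurable equiv of `Xsp` induced by a permutation of coordinates -/
def permME (π : Equiv.Perm (ℤ ⊕ ℤ)) : Xsp ≃ᵐ Xsp where
  toFun x := x ∘ ⇑π.symm
  invFun x := x ∘ ⇑π
  left_inv x := by ext a; simp
  right_inv x := by ext a; simp
  measurable_toFun := measurable_pi_lambda _ (fun a => measurable_pi_apply _)
  measurable_invFun := measurable_pi_lambda _ (fun a => measurable_pi_apply _)

lemma permME_mp (π : Equiv.Perm (ℤ ⊕ ℤ)) : MeasurePreserving (permME π) μH μH := by
  have hc : Continuous (fun x : Xsp => x ∘ ⇑π.symm) :=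
    continuous_pi (fun a => continuous_apply _)
  have := AddMonoidHom.measurePreserving (μ := μH) (ν := μH)
    (f := { toFun := fun x : Xsp => x ∘ ⇑π.symm,
            map_zero' := rfl, map_add' := fun x y => rfl }) hc
    (fun y => ⟨y ∘ ⇑π, by ext a; simp⟩) rfl
  exact this

/-- cylinder set -/
def cyl (a : ℤ ⊕ ℤ) : Set Xsp := {x | x a = 1}

lemma measurable_cyl (a : ℤ ⊕ ℤ) : MeasurableSet (cyl a) :=
  (measurable_pi_apply a) (MeasurableSet.singleton 1)

lemma image_permME_cyl (π : Equiv.Perm (ℤ ⊕ ℤ)) (a : ℤ ⊕ ℤ) :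
    (permME π) '' (cyl a) = cyl (π a) := by
  ext y
  constructor
  · rintro ⟨x, hx, rfl⟩
    simpa [permME, cyl] using hx
  · intro hy
    exact ⟨y ∘ ⇑π, by simpa [cyl] using hy, by ext b; simp [permME]⟩

-- translation invariance tools
lemma measure_preimage_add' (g : Xsp) (s : Set Xsp) : μH ((fun x => g + x) ⁻¹' s) = μH s :=
  measure_preimage_add μH g s

lemma cyl_half (a : ℤ ⊕ ℤ) : μH (cyl a) = 1/2 := by
  classical
  have h1 : (fun x : Xsp => (Pi.single a 1 : Xsp) + x) ⁻¹' (cyl a) = (cyl a)ᶜ := by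
    ext x
    simp only [Set.mem_preimage, cyl, Set.mem_setOf_eq, Set.mem_compl_iff, Pi.add_apply,
      Pi.single_eq_same]
    constructor
    · intro h; revert h; generalize x a = v; revert v; decide
    · intro h; revert h; generalize x a = v; revert v; decide
  have h2 : μH (cyl a) = μH ((cyl a)ᶜ) := by rw [← h1, measure_preimage_add' _ _]
  have h3 : μH (cyl a) + μH ((cyl a)ᶜ) = 1 := by
    rw [measure_add_measure_compl (measurable_cyl a)]; simp
  rw [← h2] at h3
  have : 2 * μH (cyl a) = 1 := by rw [two_mul]; exact h3
  exact (ENNReal.eq_div_iff (by norm_num) (by norm_num)).mpr this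

lemma cyl_pair (a b : ℤ ⊕ ℤ) (hab : a ≠ b) : μH (cyl a ∩ cyl b) = 1/4 := by
  classical
  have h1 : (fun x : Xsp => (Pi.single b 1 : Xsp) + x) ⁻¹' (cyl a ∩ cyl b) =
      cyl a ∩ (cyl b)ᶜ := by
    ext x
    simp only [Set.mem_preimage, Set.mem_inter_iff, cyl, Set.mem_setOf_eq, Set.mem_compl_iff,
      Pi.add_apply, Pi.single_eq_same, Pi.single_eq_of_ne hab ]
    constructor
    · rintro ⟨h2, h3⟩
      refine ⟨by simpa using h2, ?_⟩
      revert h3; generalize x b = v; revert v; decide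
    · rintro ⟨h2, h3⟩
      refine ⟨by simpa using h2, ?_⟩
      revert h3; generalize x b = v; revert v; decide
  have h2 : μH (cyl a ∩ cyl b) = μH (cyl a ∩ (cyl b)ᶜ) := by
    rw [← h1, measure_preimage_add' _ _]
  have h3 : μH (cyl a ∩ cyl b) + μH (cyl a ∩ (cyl b)ᶜ) = μH (cyl a) := by
    have := measure_inter_add_diff (μ := μH) (cyl a) (measurable_cyl b)
    rwa [Set.diff_eq] at this
  rw [← h2, cyl_half] at h3
  have h4 : 2 * μH (cyl a ∩ cyl b) = 1/2 := by rw [two_mul]; exact h3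
  have h5 : (4:ENNReal) * μH (cyl a ∩ cyl b) = 1 := by
    rw [show (4:ENNReal) = 2*2 by norm_num, mul_assoc, h4, one_div,
      ENNReal.mul_inv_cancel (by norm_num) (by norm_num)]
  exact (ENNReal.eq_div_iff (by norm_num) (by norm_num)).mpr h5
end DAT
-- combinatorial core, to be appended after measure part
namespace DAT
open Equiv

/-- shift on the left copy of ℤ -/
def sig : Equiv.Perm (ℤ ⊕ ℤ) := Equiv.sumCongr (Equiv.addRight (1:ℤ)) (Equiv.refl ℤ)

lemma sig_iter (k : ℕ) (m : ℤ) : (⇑sig)^[k] (Sum.inl m) = Sum.inl (m + k) := by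
  induction k with
  | zero => simp
  | succ k ih =>
    rw [Function.iterate_succ_apply', ih]
    simp [sig]
    ring

variable (p q : ℕ → ℕ) (E : Set ℕ)

open scoped Classical in
/-- the τ-orbit of the base point -/
noncomputable def uu (b : ℤ) : ℤ ⊕ ℤ :=
  if h : ∃ n, n ∈ E ∧ (q n : ℤ) = b then Sum.inl ((p h.choose : ℕ) : ℤ)
  else if b = 0 then Sum.inl 0 else Sum.inr b

variable {p q E}
variable (hp1 : ∀ n ∈ E, 1 ≤ p n) (hq1 : ∀ n ∈ E, 1 ≤ q n)
    (hpinj : ∀ m ∈ E, ∀ n ∈ E, p m = p n → m = n)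
    (hqinj : ∀ m ∈ E, ∀ n ∈ E, q m = q n → m = n)

include hqinj in
lemma uu_mem {n : ℕ} (hn : n ∈ E) : uu p q E ((q n : ℕ) : ℤ) = Sum.inl ((p n : ℕ) : ℤ) := by
  have hex : ∃ m, m ∈ E ∧ (q m : ℤ) = ((q n : ℕ) : ℤ) := ⟨n, hn, rfl⟩
  rw [uu, dif_pos hex]
  have h1 := hex.choose_spec
  have : hex.choose = n := hqinj _ h1.1 _ hn (by exact_mod_cast h1.2)
  rw [this]

lemma uu_not (b : ℤ) (hb : b ≠ 0) (hnex : ¬ ∃ n, n ∈ E ∧ (q n : ℤ) = b) :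
    uu p q E b = Sum.inr b := by
  rw [uu, dif_neg hnex, if_neg hb]

include hq1 in
lemma uu_zero : uu p q E 0 = Sum.inl 0 := by
  have hnex : ¬ ∃ n, n ∈ E ∧ (q n : ℤ) = 0 := by
    rintro ⟨n, hn, h0⟩
    have := hq1 n hn
    omega
  rw [uu, dif_neg hnex, if_pos rfl]

include hp1 hpinj in
lemma uu_inj : Function.Injective (uu p q E) := by
  intro b b' hbb
  classical
  by_cases h : ∃ n, n ∈ E ∧ (q n : ℤ) = b <;>
    by_cases h' : ∃ n, n ∈ E ∧ (q n : ℤ) = b'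
  · rw [uu, dif_pos h, uu, dif_pos h'] at hbb
    have e1 := h.choose_spec; have e2 := h'.choose_spec
    have : p h.choose = p h'.choose := by
      have := Sum.inl.inj hbb; exact_mod_cast this
    have := hpinj _ e1.1 _ e2.1 this
    rw [← e1.2, ← e2.2, this]
  · rw [uu, dif_pos h, uu, dif_neg h'] at hbb
    by_cases hb' : b' = 0
    · rw [if_pos hb'] at hbb
      have := Sum.inl.inj hbb
      have hpc := hp1 _ h.choose_spec.1
      omega
    · rw [if_neg hb'] at hbb; exact absurd hbb (by simp)
  · rw [uu, dif_neg h, uu, dif_pos h'] at hbb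
    by_cases hb : b = 0
    · rw [if_pos hb] at hbb
      have := Sum.inl.inj hbb
      have hpc := hp1 _ h'.choose_spec.1
      omega
    · rw [if_neg hb] at hbb; exact absurd hbb (by simp)
  · rw [uu, dif_neg h, uu, dif_neg h'] at hbb
    by_cases hb : b = 0 <;> by_cases hb' : b' = 0
    · omega
    · rw [if_pos hb, if_neg hb'] at hbb; exact absurd hbb (by simp)
    · rw [if_neg hb, if_pos hb'] at hbb; exact absurd hbb (by simp)
    · rw [if_neg hb, if_neg hb'] at hbb
      exact congrArg (Sum.elim id id) hbb

open scoped Classical in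
/-- the second transformation: shift along the embedded copy of ℤ given by `uu` -/
noncomputable def tau (hu : Function.Injective (uu p q E)) : Equiv.Perm (ℤ ⊕ ℤ) :=
  (Equiv.addRight (1:ℤ)).extendDomain (Equiv.ofInjective _ hu)

lemma tau_apply_u (hu : Function.Injective (uu p q E)) (c : ℤ) :
    tau hu (uu p q E c) = uu p q E (c + 1) := by
  classical
  have := Equiv.Perm.extendDomain_apply_image (Equiv.addRight (1:ℤ))
    (Equiv.ofInjective _ hu) c
  simpa [tau] using this

lemma tau_iter (hu : Function.Injective (uu p q E)) (k : ℕ) (c : ℤ) :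
    (⇑(tau hu))^[k] (uu p q E c) = uu p q E (c + k) := by
  induction k with
  | zero => simp
  | succ k ih =>
    rw [Function.iterate_succ_apply', ih, tau_apply_u]
    norm_num
    ring_nf

end DAT
namespace DAT

lemma image_iter (π : Equiv.Perm (ℤ ⊕ ℤ)) (k : ℕ) (a : ℤ ⊕ ℤ) :
    (⇑(permME π))^[k] '' cyl a = cyl ((⇑π)^[k] a) := by
  induction k with
  | zero => simp
  | succ k ih =>
    rw [Function.iterate_succ', Function.iterate_succ']
    show (⇑(permME π) ∘ (⇑(permME π))^[k]) '' cyl a = _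
    rw [Set.image_comp, ih, image_permME_cyl]
    rfl

/-- the block-boundary sequence -/
def hseq (n₁ : ℕ) (j : ℕ) : ℕ := (n₁ + 1) * (j + 1).factorial

lemma hseq_succ (n₁ j : ℕ) : hseq n₁ (j+1) = (j+2) * hseq n₁ j := by
  unfold hseq
  rw [show j+1+1 = j+2 from rfl, Nat.factorial_succ]
  ring

lemma hseq_pos (n₁ j : ℕ) : 0 < hseq n₁ j :=
  Nat.mul_pos (by omega) (Nat.factorial_pos _)

lemma hseq_mono (n₁ : ℕ) : StrictMono (hseq n₁) := by
  apply strictMono_nat_of_lt_succ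
  intro j
  rw [hseq_succ]
  have := hseq_pos n₁ j
  nlinarith

lemma hseq_gt (n₁ j : ℕ) : n₁ < hseq n₁ j := by
  have h0 : hseq n₁ 0 = n₁ + 1 := by unfold hseq; simp
  have := (hseq_mono n₁).monotone (Nat.zero_le j)
  omega

/-- the set of good times -/
def Eset (p q : ℕ → ℕ) (n₁ : ℕ) : Set ℕ :=
  {n | ∃ k, hseq n₁ (2*k) < n ∧ n ≤ hseq n₁ (2*k+1)}

lemma Eset_gt {p q : ℕ → ℕ} {n₁ n : ℕ} (hn : n ∈ Eset p q n₁) : n₁ < n := by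
  obtain ⟨k, h1, _⟩ := hn
  have := hseq_gt n₁ (2*k)
  omega

open scoped Classical in
lemma Eset_count_lower (p q : ℕ → ℕ) (n₁ k : ℕ) :
    hseq n₁ (2*k+1) - hseq n₁ (2*k) ≤
      ((Finset.Icc 1 (hseq n₁ (2*k+1))).filter (· ∈ Eset p q n₁)).card := by
  rw [← Nat.card_Ioc (hseq n₁ (2*k)) (hseq n₁ (2*k+1))]
  apply Finset.card_le_card
  intro n hn
  rw [Finset.mem_Ioc] at hn
  rw [Finset.mem_filter, Finset.mem_Icc]
  have := hseq_pos n₁ (2*k)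
  exact ⟨⟨by omega, hn.2⟩, ⟨k, hn.1, hn.2⟩⟩

open scoped Classical in
lemma Eset_count_upper (p q : ℕ → ℕ) (n₁ k : ℕ) :
    ((Finset.Icc 1 (hseq n₁ (2*k+2))).filter (· ∈ Eset p q n₁)).card ≤ hseq n₁ (2*k+1) := by
  have hsub : ((Finset.Icc 1 (hseq n₁ (2*k+2))).filter (· ∈ Eset p q n₁)) ⊆
      Finset.Icc 1 (hseq n₁ (2*k+1)) := by
    intro n hn
    rw [Finset.mem_filter, Finset.mem_Icc] at hn
    obtain ⟨⟨h1, h2⟩, j, hj1, hj2⟩ := hn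
    rw [Finset.mem_Icc]
    refine ⟨h1, ?_⟩
    by_cases hjk : j ≤ k
    · exact hj2.trans ((hseq_mono n₁).monotone (by omega))
    · have : hseq n₁ (2*k+2) ≤ hseq n₁ (2*j) := (hseq_mono n₁).monotone (by omega)
      omega
  calc _ ≤ (Finset.Icc 1 (hseq n₁ (2*k+1))).card := Finset.card_le_card hsub
    _ = hseq n₁ (2*k+1) := by rw [Nat.card_Icc]; omega

lemma mono_of_step {f : ℕ → ℕ} {n₀ : ℕ} (h : ∀ n, n₀ ≤ n → f n < f (n+1)) :
    ∀ a b, n₀ ≤ a → a < b → f a < f b := by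
  intro a b ha hab
  induction b with
  | zero => omega
  | succ b ih =>
    rcases Nat.lt_succ_iff_lt_or_eq.mp hab with h1 | h1
    · exact (ih h1).trans (h b (by omega))
    · subst h1; exact h a ha

end DAT

open DAT in

/-- Refined form of Theorem 1: there are two subsequential limits of the averages,
namely `μ(C)` along `(N_k)` and `μ(C)²` along `(M_k)`; in particular the averages diverge. -/
theorem divergent_averages_two_limits (p q : ℕ → ℕ)
    (hp : Tendsto (fun n => (p (n + 1) : ℤ) - (p n : ℤ)) atTop atTop)
    (hq : Tendsto (fun n => (q (n + 1) : ℤ) - (q n : ℤ)) atTop atTop) :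
    ∃ (X : Type) (_ : MeasurableSpace X) (μ : Measure X), IsProbabilityMeasure μ ∧
      ∃ (S T : X ≃ᵐ X), MeasurePreserving S μ μ ∧ MeasurePreserving T μ μ ∧
        ∃ C : Set X, MeasurableSet C ∧ 0 < μ C ∧ μ C < 1 ∧
          ∃ N M : ℕ → ℕ, StrictMono N ∧ StrictMono M ∧
            (∀ k, 0 < N k) ∧ (∀ k, 0 < M k) ∧
            Tendsto N atTop atTop ∧ Tendsto M atTop atTop ∧
            Tendsto
              (fun k : ℕ => (1 / (N k : ℝ)) *
                ∑ n ∈ Finset.Icc 1 (N k),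
                  (μ ((⇑S)^[p n] '' C ∩ (⇑T)^[q n] '' C)).toReal)
              atTop (𝓝 ((μ C).toReal)) ∧
            Tendsto
              (fun k : ℕ => (1 / (M k : ℝ)) *
                ∑ n ∈ Finset.Icc 1 (M k),
                  (μ ((⇑S)^[p n] '' C ∩ (⇑T)^[q n] '' C)).toReal)
              atTop (𝓝 ((μ C).toReal ^ 2)) ∧
            ¬ ∃ l : ℝ, Tendsto
              (fun N' : ℕ => (1 / (N' : ℝ)) *
                ∑ n ∈ Finset.Icc 1 N',
                  (μ ((⇑S)^[p n] '' C ∩ (⇑T)^[q n] '' C)).toReal)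
              atTop (𝓝 l) := by
  classical
  -- Step 1: a threshold beyond which p and q are strictly increasing
  obtain ⟨n₀, hn₀⟩ := Filter.eventually_atTop.mp
    ((hp.eventually_ge_atTop 1).and (hq.eventually_ge_atTop 1))
  have hpstep : ∀ n, n₀ ≤ n → p n < p (n+1) := fun n hn => by have := (hn₀ n hn).1; omega
  have hqstep : ∀ n, n₀ ≤ n → q n < q (n+1) := fun n hn => by have := (hn₀ n hn).2; omega
  have hpmono := mono_of_step hpstep
  have hqmono := mono_of_step hqstep
  have hp_pos : ∀ n, n₀ < n → 1 ≤ p n := fun n hn => by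
    have := hpmono n₀ n le_rfl hn; omega
  have hq_pos : ∀ n, n₀ < n → 1 ≤ q n := fun n hn => by
    have := hqmono n₀ n le_rfl hn; omega
  have hpinj : ∀ m, n₀ < m → ∀ n, n₀ < n → p m = p n → m = n := by
    intro m hm n hn he
    rcases lt_trichotomy m n with h|h|h
    · have := hpmono m n (by omega) h; omega
    · exact h
    · have := hpmono n m (by omega) h; omega
  have hqinj : ∀ m, n₀ < m → ∀ n, n₀ < n → q m = q n → m = n := by
    intro m hm n hn he
    rcases lt_trichotomy m n with h|h|h
    · have := hqmono m n (by omega) h; omega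
    · exact h
    · have := hqmono n m (by omega) h; omega
  -- Step 2: the set of "good" times and the two permutations
  set E : Set ℕ := Eset p q n₀ with hE
  have hEgt : ∀ n ∈ E, n₀ < n := fun n hn => Eset_gt hn
  have hp1 : ∀ n ∈ E, 1 ≤ p n := fun n hn => hp_pos n (hEgt n hn)
  have hq1 : ∀ n ∈ E, 1 ≤ q n := fun n hn => hq_pos n (hEgt n hn)
  have hpinjE : ∀ m ∈ E, ∀ n ∈ E, p m = p n → m = n :=
    fun m hm n hn => hpinj m (hEgt m hm) n (hEgt n hn)
  have hqinjE : ∀ m ∈ E, ∀ n ∈ E, q m = q n → m = n :=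
    fun m hm n hn => hqinj m (hEgt m hm) n (hEgt n hn)
  have hu : Function.Injective (uu p q E) := uu_inj hp1 hpinjE
  -- Step 3: the dynamical data
  set C : Set Xsp := cyl (Sum.inl 0) with hC
  set S : Xsp ≃ᵐ Xsp := permME sig with hS
  set T : Xsp ≃ᵐ Xsp := permME (tau hu) with hT
  have hμC : μH C = 1/2 := cyl_half _
  have hμCtoReal : (μH C).toReal = 1/2 := by rw [hμC]; norm_num
  -- Step 4: the values of the correlation sequence
  set cnd : ℕ → Prop := fun n => (⇑sig)^[p n] (Sum.inl 0) = (⇑(tau hu))^[q n] (Sum.inl 0)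
    with hcnd
  have iterT : ∀ n : ℕ, (⇑(tau hu))^[n] (Sum.inl 0) = uu p q E ((n:ℕ):ℤ) := by
    intro n
    rw [show (Sum.inl 0 : ℤ ⊕ ℤ) = uu p q E 0 from (uu_zero hq1).symm, tau_iter]
    norm_num
  have hcondE : ∀ n ∈ E, cnd n := by
    intro n hn
    show _ = _
    rw [sig_iter, iterT, uu_mem hqinjE hn]
    norm_num
  have hcond_to_E : ∀ n, n₀ < n → cnd n → n ∈ E := by
    intro n hn hcn
    by_contra hnE
    have h1 : ¬ ∃ m, m ∈ E ∧ (q m : ℤ) = ((q n : ℕ) : ℤ) := by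
      rintro ⟨m, hm, hqm⟩
      have hqq : q m = q n := by exact_mod_cast hqm
      have := hqinj m (hEgt m hm) n hn hqq
      exact hnE (this ▸ hm)
    have h2 : ((q n : ℕ) : ℤ) ≠ 0 := by have := hq_pos n hn; omega
    have h3 := uu_not (p := p) ((q n : ℕ) : ℤ) h2 h1
    have hcn' : (⇑sig)^[p n] (Sum.inl 0) = (⇑(tau hu))^[q n] (Sum.inl 0) := hcn
    rw [sig_iter, iterT, h3] at hcn'
    exact absurd hcn' (by simp)
  have hcval : ∀ n, (μH ((⇑S)^[p n] '' C ∩ (⇑T)^[q n] '' C)).toReal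
      = if cnd n then (1/2:ℝ) else 1/4 := by
    intro n
    rw [hS, hT, hC, image_iter, image_iter]
    by_cases hcn : cnd n
    · rw [if_pos hcn]
      have hcn' : (⇑sig)^[p n] (Sum.inl 0) = (⇑(tau hu))^[q n] (Sum.inl 0) := hcn
      rw [hcn', Set.inter_self, cyl_half]
      norm_num
    · rw [if_neg hcn]
      have hne : (⇑sig)^[p n] (Sum.inl 0) ≠ (⇑(tau hu))^[q n] (Sum.inl 0) := hcn
      rw [cyl_pair _ _ hne]
      norm_num
  -- Step 5: counting
  set κ : ℕ → ℕ := fun N => ((Finset.Icc 1 N).filter (fun n => cnd n)).card with hκ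
  set eE : ℕ → ℕ := fun N => ((Finset.Icc 1 N).filter (· ∈ E)).card with heE
  have hsum : ∀ N, ∑ n ∈ Finset.Icc 1 N,
      (μH ((⇑S)^[p n] '' C ∩ (⇑T)^[q n] '' C)).toReal = (N:ℝ)/4 + (κ N : ℝ)/4 := by
    intro N
    have hterm : ∀ n ∈ Finset.Icc 1 N, (μH ((⇑S)^[p n] '' C ∩ (⇑T)^[q n] '' C)).toReal
        = 1/4 + (if cnd n then (1/4:ℝ) else 0) := by
      intro n _
      rw [hcval n]
      by_cases hcn : cnd n
      · rw [if_pos hcn, if_pos hcn]; norm_num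
      · rw [if_neg hcn, if_neg hcn]; norm_num
    rw [Finset.sum_congr rfl hterm, Finset.sum_add_distrib, Finset.sum_const,
      ← Finset.sum_filter, Finset.sum_const, Nat.card_Icc]
    simp only [Nat.add_sub_cancel, nsmul_eq_mul]
    push_cast
    ring
  have hEκ : ∀ N, eE N ≤ κ N := by
    intro N
    apply Finset.card_le_card
    intro n hn
    rw [Finset.mem_filter] at hn ⊢
    exact ⟨hn.1, hcondE n hn.2⟩
  have hκE : ∀ N, κ N ≤ eE N + n₀ := by
    intro N
    have hsub : (Finset.Icc 1 N).filter (fun n => cnd n) ⊆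
        ((Finset.Icc 1 N).filter (· ∈ E)) ∪ Finset.Icc 1 n₀ := by
      intro n hn
      rw [Finset.mem_filter] at hn
      rw [Finset.mem_union, Finset.mem_filter]
      by_cases h : n₀ < n
      · exact Or.inl ⟨hn.1, hcond_to_E n h hn.2⟩
      · exact Or.inr (Finset.mem_Icc.mpr ⟨(Finset.mem_Icc.mp hn.1).1, by omega⟩)
    calc κ N ≤ _ := Finset.card_le_card hsub
      _ ≤ eE N + (Finset.Icc 1 n₀).card := Finset.card_union_le _ _
      _ = eE N + n₀ := by rw [Nat.card_Icc]; omega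
  have hκN : ∀ N, κ N ≤ N := by
    intro N
    calc κ N ≤ (Finset.Icc 1 N).card := Finset.card_filter_le _ _
      _ = N := by rw [Nat.card_Icc]; omega
  -- the two subsequences
  set Nf : ℕ → ℕ := fun k => hseq n₀ (2*k+1) with hNf
  set Mf : ℕ → ℕ := fun k => hseq n₀ (2*k+2) with hMf
  have hNmono : StrictMono Nf := fun a b hab => hseq_mono n₀ (by omega : 2*a+1 < 2*b+1)
  have hMmono : StrictMono Mf := fun a b hab => hseq_mono n₀ (by omega : 2*a+2 < 2*b+2)
  have hNpos : ∀ k, 0 < Nf k := fun k => hseq_pos n₀ _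
  have hMpos : ∀ k, 0 < Mf k := fun k => hseq_pos n₀ _
  -- the average as a function of the endpoint
  set avg : ℕ → ℝ := fun N => (1 / (N : ℝ)) *
    ∑ n ∈ Finset.Icc 1 N, (μH ((⇑S)^[p n] '' C ∩ (⇑T)^[q n] '' C)).toReal with havg
  have havg_eq : ∀ N, avg N = ((N:ℝ)/4 + (κ N : ℝ)/4) / N := by
    intro N
    rw [havg]
    simp only
    rw [hsum N, one_div, inv_mul_eq_div]
  -- limit along Nf
  have hA : Tendsto (fun k => avg (Nf k)) atTop (𝓝 (1/2)) := by
    have hlow : ∀ k : ℕ, 1/2 - (1/4) * (2*(k:ℝ)+2)⁻¹ ≤ avg (Nf k) := by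
      intro k
      have hH : (0:ℝ) < hseq n₀ (2*k) := by exact_mod_cast hseq_pos n₀ (2*k)
      have hNH : (Nf k : ℝ) = (2*(k:ℝ)+2) * (hseq n₀ (2*k) : ℝ) := by
        rw [hNf]
        have := hseq_succ n₀ (2*k)
        push_cast [this]
        ring
      have hNr : (0:ℝ) < (Nf k : ℝ) := by exact_mod_cast hNpos k
      have hκlow : (Nf k : ℝ) - (hseq n₀ (2*k) : ℝ) ≤ (κ (Nf k) : ℝ) := by
        have h1 := (Eset_count_lower p q n₀ k).trans (hEκ (Nf k))
        have h2 : hseq n₀ (2*k) ≤ hseq n₀ (2*k+1) := (hseq_mono n₀).monotone (by omega)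
        have : (Nf k) - hseq n₀ (2*k) ≤ κ (Nf k) := h1
        have hcast : ((Nf k - hseq n₀ (2*k) : ℕ) : ℝ)
            = (Nf k : ℝ) - (hseq n₀ (2*k) : ℝ) := by
          rw [Nat.cast_sub h2]
        rw [← hcast]
        exact_mod_cast this
      rw [havg_eq, le_div_iff₀ hNr]
      have e1 : (2*(k:ℝ)+2)⁻¹ * (Nf k : ℝ) = (hseq n₀ (2*k) : ℝ) := by
        rw [hNH]
        field_simp
      nlinarith [hκlow, e1]
    have hhigh : ∀ k : ℕ, avg (Nf k) ≤ 1/2 := by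
      intro k
      have hNr : (0:ℝ) < (Nf k : ℝ) := by exact_mod_cast hNpos k
      have hκhi : (κ (Nf k) : ℝ) ≤ (Nf k : ℝ) := by exact_mod_cast hκN (Nf k)
      rw [havg_eq, div_le_iff₀ hNr]
      nlinarith
    have htend : Tendsto (fun k : ℕ => 1/2 - (1/4) * (2*(k:ℝ)+2)⁻¹) atTop (𝓝 (1/2)) := by
      have h1 : Tendsto (fun k : ℕ => 2*(k:ℝ)+2) atTop atTop :=
        tendsto_atTop_add_const_right _ 2
          (tendsto_natCast_atTop_atTop.const_mul_atTop (by norm_num))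
      have h2 : Tendsto (fun k : ℕ => (2*(k:ℝ)+2)⁻¹) atTop (𝓝 0) :=
        tendsto_inv_atTop_zero.comp h1
      have := (h2.const_mul (1/4 : ℝ)).const_sub (1/2 : ℝ)
      simpa using this
    exact tendsto_of_tendsto_of_tendsto_of_le_of_le htend tendsto_const_nhds hlow hhigh
  -- limit along Mf
  have hB : Tendsto (fun k => avg (Mf k)) atTop (𝓝 (1/4)) := by
    have hlow : ∀ k : ℕ, (1/4 : ℝ) ≤ avg (Mf k) := by
      intro k
      have hMr : (0:ℝ) < (Mf k : ℝ) := by exact_mod_cast hMpos k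
      have hκnn : (0:ℝ) ≤ (κ (Mf k) : ℝ) := Nat.cast_nonneg _
      rw [havg_eq, le_div_iff₀ hMr]
      nlinarith
    have hhigh : ∀ k : ℕ, avg (Mf k) ≤ 1/4 + (1+(n₀:ℝ)) * (2*(k:ℝ)+3)⁻¹ := by
      intro k
      have hH : (1:ℝ) ≤ (hseq n₀ (2*k+1) : ℝ) := by exact_mod_cast hseq_pos n₀ (2*k+1)
      have hMH : (Mf k : ℝ) = (2*(k:ℝ)+3) * (hseq n₀ (2*k+1) : ℝ) := by
        rw [hMf]
        have := hseq_succ n₀ (2*k+1)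
        push_cast [this]
        ring
      have hMr : (0:ℝ) < (Mf k : ℝ) := by exact_mod_cast hMpos k
      have hκhi : (κ (Mf k) : ℝ) ≤ (hseq n₀ (2*k+1) : ℝ) + (n₀:ℝ) := by
        have h1 := (hκE (Mf k)).trans (Nat.add_le_add_right (Eset_count_upper p q n₀ k) n₀)
        exact_mod_cast h1
      rw [havg_eq, div_le_iff₀ hMr]
      have e1 : (2*(k:ℝ)+3)⁻¹ * (Mf k : ℝ) = (hseq n₀ (2*k+1) : ℝ) := by
        rw [hMH]
        field_simp
      have hn0 : (0:ℝ) ≤ (n₀:ℝ) := by positivity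
      nlinarith [hκhi, e1, hH, hn0, hMr]
    have htend : Tendsto (fun k : ℕ => 1/4 + (1+(n₀:ℝ)) * (2*(k:ℝ)+3)⁻¹) atTop (𝓝 (1/4)) := by
      have h1 : Tendsto (fun k : ℕ => 2*(k:ℝ)+3) atTop atTop :=
        tendsto_atTop_add_const_right _ 3
          (tendsto_natCast_atTop_atTop.const_mul_atTop (by norm_num))
      have h2 : Tendsto (fun k : ℕ => (2*(k:ℝ)+3)⁻¹) atTop (𝓝 0) :=
        tendsto_inv_atTop_zero.comp h1
      have := (h2.const_mul (1+(n₀:ℝ))).const_add (1/4 : ℝ)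
      simpa using this
    exact tendsto_of_tendsto_of_tendsto_of_le_of_le tendsto_const_nhds htend hlow hhigh
  -- Step 6: assemble
  refine ⟨Xsp, inferInstance, μH, inferInstance, S, T, ?_, ?_, C, measurable_cyl _, ?_, ?_,
    Nf, Mf, hNmono, hMmono, hNpos, hMpos, hNmono.tendsto_atTop, hMmono.tendsto_atTop,
    ?_, ?_, ?_⟩
  · exact permME_mp sig
  · exact permME_mp (tau hu)
  · rw [hμC]; norm_num
  · rw [hμC]
    rw [show (1:ENNReal)/2 = 2⁻¹ by rw [one_div]]
    rw [ENNReal.inv_lt_one]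
    norm_num
  · rw [hμCtoReal]
    exact hA
  · rw [hμCtoReal]
    have : ((1:ℝ)/2)^2 = 1/4 := by norm_num
    rw [this]
    exact hB
  · rintro ⟨l, hl⟩
    have hNt : Tendsto Nf atTop atTop := hNmono.tendsto_atTop
    have hMt : Tendsto Mf atTop atTop := hMmono.tendsto_atTop
    have h1 : Tendsto (fun k => avg (Nf k)) atTop (𝓝 l) := hl.comp hNt
    have h2 : Tendsto (fun k => avg (Mf k)) atTop (𝓝 l) := hl.comp hMt
    have e1 : l = 1/2 := tendsto_nhds_unique h1 hA
    have e2 : l = 1/4 := tendsto_nhds_unique h2 hB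
    rw [e1] at e2
    norm_num at e2
end
end

section
/- Let p, q : ℕ → ℕ be sequences such that p(n+1) − p(n) → +∞ and q(n+1) − q(n) → +∞ as n → ∞. Then there exist a σ-finite measure space (X, μ), invertible measure-preserving transformations 𝐒, 𝐏 of (X, μ), a measurable set A with 0 < μ(A) < ∞, and a strictly increasing sequence (N_j) of positive integers with N_j / N_{j+1} → 0, such that, setting 𝐓 = 𝐏 ∘ 𝐒 ∘ 𝐏⁻¹, one has (1/N_{2k}) · Σ_{n=1}^{N_{2k}} μ(𝐒^{p(n)} A ∩ 𝐓^{q(n)} A) → μ(A) and (1/N_{2k+1}) · Σ_{n=1}^{N_{2k+1}} μ(𝐒^{p(n)} A ∩ 𝐓^{q(n)} A) → 0 as k → ∞. -/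
open MeasureTheory Filter Topology

namespace SFC

/-- The growth sequence `N j = (n₀+1)·(j+1)!`. -/
def Nseq (n₀ j : ℕ) : ℕ := (n₀ + 1) * Nat.factorial (j + 1)

lemma Nseq_pos (n₀ j : ℕ) : 0 < Nseq n₀ j :=
  Nat.mul_pos (Nat.succ_pos _) (Nat.factorial_pos _)

lemma Nseq_succ (n₀ j : ℕ) : Nseq n₀ (j + 1) = (j + 2) * Nseq n₀ j := by
  simp only [Nseq, Nat.factorial_succ]; ring

lemma Nseq_strictMono (n₀ : ℕ) : StrictMono (Nseq n₀) := by
  apply strictMono_nat_of_lt_succ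
  intro j
  rw [Nseq_succ]
  nlinarith [Nseq_pos n₀ j]

lemma Nseq_ge (n₀ j : ℕ) : n₀ + 1 ≤ Nseq n₀ j :=
  Nat.le_mul_of_pos_right _ (Nat.factorial_pos _)

/-- The set of "good" times: union of the blocks `(N(2k+1), N(2k+2)]`. -/
def inE (n₀ n : ℕ) : Prop := ∃ k, Nseq n₀ (2 * k + 1) < n ∧ n ≤ Nseq n₀ (2 * k + 2)

lemma inE_gt {n₀ n : ℕ} (h : inE n₀ n) : n₀ < n := by
  obtain ⟨k, h1, _⟩ := h
  have := Nseq_ge n₀ (2 * k + 1)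
  omega

section P

variable (p q : ℕ → ℕ) (n₀ : ℕ)

open scoped Classical in
/-- The conjugating involution on `ℤ × ℤ`. -/
noncomputable def Pfun (x : ℤ × ℤ) : ℤ × ℤ :=
  if h : ∃ n, inE n₀ n ∧ x = ((q n : ℤ), 1) then ((p h.choose : ℤ), 0)
  else if h' : ∃ n, inE n₀ n ∧ x = ((p n : ℤ), 0) then ((q h'.choose : ℤ), 1)
  else if x = (0, 1) then (0, 0)
  else if x = (0, 0) then (0, 1)
  else x

variable {p q n₀}
variable (hm : ∀ a b, n₀ ≤ a → a < b → p a < p b ∧ q a < q b)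
    (hpos : ∀ n, n₀ ≤ n → 1 ≤ p n ∧ 1 ≤ q n)

include hm in
lemma p_inj {a b : ℕ} (ha : n₀ ≤ a) (hb : n₀ ≤ b) (h : p a = p b) : a = b := by
  rcases lt_trichotomy a b with h' | h' | h'
  · exact absurd h (Nat.ne_of_lt (hm a b ha h').1)
  · exact h'
  · exact absurd h.symm (Nat.ne_of_lt (hm b a hb h').1)

include hm in
lemma q_inj {a b : ℕ} (ha : n₀ ≤ a) (hb : n₀ ≤ b) (h : q a = q b) : a = b := by
  rcases lt_trichotomy a b with h' | h' | h'
  · exact absurd h (Nat.ne_of_lt (hm a b ha h').2)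
  · exact h'
  · exact absurd h.symm (Nat.ne_of_lt (hm b a hb h').2)

include hm in
lemma Pfun_q_of_inE {n : ℕ} (hn : inE n₀ n) :
    Pfun p q n₀ ((q n : ℤ), 1) = ((p n : ℤ), 0) := by
  have h : ∃ m, inE n₀ m ∧ ((q n : ℤ), (1 : ℤ)) = ((q m : ℤ), 1) := ⟨n, hn, rfl⟩
  rw [Pfun, dif_pos h]
  obtain ⟨hc1, hc2⟩ := h.choose_spec
  rw [Prod.mk.injEq] at hc2
  have hqq : q n = q h.choose := by exact_mod_cast hc2.1
  have : h.choose = n := q_inj hm (inE_gt hc1).le (inE_gt hn).le hqq.symm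
  rw [this]

include hm in
lemma Pfun_p_of_inE {n : ℕ} (hn : inE n₀ n) :
    Pfun p q n₀ ((p n : ℤ), 0) = ((q n : ℤ), 1) := by
  have h : ¬ ∃ m, inE n₀ m ∧ ((p n : ℤ), (0 : ℤ)) = ((q m : ℤ), 1) := by
    rintro ⟨m, -, hx⟩
    rw [Prod.mk.injEq] at hx
    exact absurd hx.2 (by norm_num)
  have h' : ∃ m, inE n₀ m ∧ ((p n : ℤ), (0 : ℤ)) = ((p m : ℤ), 0) := ⟨n, hn, rfl⟩
  rw [Pfun, dif_neg h, dif_pos h']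
  obtain ⟨hc1, hc2⟩ := h'.choose_spec
  rw [Prod.mk.injEq] at hc2
  have hpp : p n = p h'.choose := by exact_mod_cast hc2.1
  have : h'.choose = n := p_inj hm (inE_gt hc1).le (inE_gt hn).le hpp.symm
  rw [this]

include hpos in
lemma Pfun_zero_one : Pfun p q n₀ ((0 : ℤ), (1 : ℤ)) = (0, 0) := by
  have h : ¬ ∃ m, inE n₀ m ∧ ((0 : ℤ), (1 : ℤ)) = ((q m : ℤ), 1) := by
    rintro ⟨m, hmE, hx⟩
    rw [Prod.mk.injEq] at hx
    have h1 : (0 : ℤ) = (q m : ℤ) := hx.1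
    have := (hpos m (inE_gt hmE).le).2
    omega
  have h' : ¬ ∃ m, inE n₀ m ∧ ((0 : ℤ), (1 : ℤ)) = ((p m : ℤ), 0) := by
    rintro ⟨m, -, hx⟩
    rw [Prod.mk.injEq] at hx
    exact absurd hx.2 (by norm_num)
  rw [Pfun, dif_neg h, dif_neg h', if_pos rfl]

include hpos in
lemma Pfun_zero_zero : Pfun p q n₀ ((0 : ℤ), (0 : ℤ)) = (0, 1) := by
  have h : ¬ ∃ m, inE n₀ m ∧ ((0 : ℤ), (0 : ℤ)) = ((q m : ℤ), 1) := by
    rintro ⟨m, -, hx⟩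
    rw [Prod.mk.injEq] at hx
    exact absurd hx.2 (by norm_num)
  have h' : ¬ ∃ m, inE n₀ m ∧ ((0 : ℤ), (0 : ℤ)) = ((p m : ℤ), 0) := by
    rintro ⟨m, hmE, hx⟩
    rw [Prod.mk.injEq] at hx
    have h1 : (0 : ℤ) = (p m : ℤ) := hx.1
    have := (hpos m (inE_gt hmE).le).1
    omega
  rw [Pfun, dif_neg h, dif_neg h', if_neg (by simp [Prod.ext_iff]), if_pos rfl]

include hm hpos in
lemma Pfun_q_of_not_inE {n : ℕ} (hn₀ : n₀ ≤ n) (hn : ¬ inE n₀ n) :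
    Pfun p q n₀ ((q n : ℤ), 1) = ((q n : ℤ), 1) := by
  have h : ¬ ∃ m, inE n₀ m ∧ ((q n : ℤ), (1 : ℤ)) = ((q m : ℤ), 1) := by
    rintro ⟨m, hmE, hx⟩
    rw [Prod.mk.injEq] at hx
    have h1 : q n = q m := by exact_mod_cast hx.1
    exact hn ((q_inj hm hn₀ (inE_gt hmE).le h1) ▸ hmE)
  have h' : ¬ ∃ m, inE n₀ m ∧ ((q n : ℤ), (1 : ℤ)) = ((p m : ℤ), 0) := by
    rintro ⟨m, -, hx⟩
    rw [Prod.mk.injEq] at hx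
    exact absurd hx.2 (by norm_num)
  have h0 : ¬ ((q n : ℤ), (1 : ℤ)) = ((0 : ℤ), (1 : ℤ)) := by
    intro hx
    rw [Prod.mk.injEq] at hx
    have h1 : (q n : ℤ) = 0 := hx.1
    have := (hpos n hn₀).2
    omega
  have h00 : ¬ ((q n : ℤ), (1 : ℤ)) = ((0 : ℤ), (0 : ℤ)) := by
    intro hx
    rw [Prod.mk.injEq] at hx
    exact absurd hx.2 (by norm_num)
  rw [Pfun, dif_neg h, dif_neg h', if_neg h0, if_neg h00]

include hm hpos in
lemma Pfun_invol (x : ℤ × ℤ) : Pfun p q n₀ (Pfun p q n₀ x) = x := by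
  by_cases h : ∃ n, inE n₀ n ∧ x = ((q n : ℤ), 1)
  · have hx : Pfun p q n₀ x = ((p h.choose : ℤ), 0) := by rw [Pfun, dif_pos h]
    obtain ⟨hc1, hc2⟩ := h.choose_spec
    rw [hx, Pfun_p_of_inE hm hc1, ← hc2]
  · by_cases h' : ∃ n, inE n₀ n ∧ x = ((p n : ℤ), 0)
    · have hx : Pfun p q n₀ x = ((q h'.choose : ℤ), 1) := by rw [Pfun, dif_neg h, dif_pos h']
      obtain ⟨hc1, hc2⟩ := h'.choose_spec
      rw [hx, Pfun_q_of_inE hm hc1, ← hc2]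
    · by_cases h0 : x = ((0 : ℤ), (1 : ℤ))
      · have hx : Pfun p q n₀ x = (0, 0) := by rw [Pfun, dif_neg h, dif_neg h', if_pos h0]
        rw [hx, Pfun_zero_zero hpos, h0]
      · by_cases h00 : x = ((0 : ℤ), (0 : ℤ))
        · have hx : Pfun p q n₀ x = (0, 1) := by
            rw [Pfun, dif_neg h, dif_neg h', if_neg h0, if_pos h00]
          rw [hx, Pfun_zero_one hpos, h00]
        · have hx : Pfun p q n₀ x = x := by
            rw [Pfun, dif_neg h, dif_neg h', if_neg h0, if_neg h00]
          rw [hx, Pfun, dif_neg h, dif_neg h', if_neg h0, if_neg h00]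

end P

lemma count_sigmaFinite {α : Type*} [MeasurableSpace α] [Countable α]
    [MeasurableSingletonClass α] : SigmaFinite (Measure.count : Measure α) := by
  refine Measure.sigmaFinite_of_countable (Set.countable_range fun x : α => ({x} : Set α))
    ?_ ?_
  · rintro s ⟨x, rfl⟩
    simp [Measure.count_singleton]
  · ext x
    simp only [Set.mem_sUnion, Set.mem_range, Set.mem_univ, iff_true]
    exact ⟨{x}, ⟨x, rfl⟩, rfl⟩

lemma count_preserving {α : Type*} [MeasurableSpace α] [Countable α]
    [MeasurableSingletonClass α] (e : α ≃ᵐ α) :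
    MeasurePreserving e Measure.count Measure.count := by
  refine ⟨e.measurable, ?_⟩
  ext s hs
  rw [Measure.map_apply e.measurable hs]
  have : ⇑e ⁻¹' s = ⇑e.symm '' s := by
    ext x
    constructor
    · intro hx
      exact ⟨e x, hx, e.symm_apply_apply x⟩
    · rintro ⟨y, hy, rfl⟩
      simpa [e.apply_symm_apply] using hy
  rw [this, Measure.count_injective_image e.symm.injective]



section F

variable (p q : ℕ → ℕ) (n₀ : ℕ)

open scoped Classical in
/-- The value of the `n`-th correlation term. -/
noncomputable def Fval (n : ℕ) : ℝ :=
  if Pfun p q n₀ ((q n : ℤ), 1) = ((p n : ℤ), 0) then 1 else 0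

variable {p q n₀}
variable (hm : ∀ a b, n₀ ≤ a → a < b → p a < p b ∧ q a < q b)
    (hpos : ∀ n, n₀ ≤ n → 1 ≤ p n ∧ 1 ≤ q n)

lemma Fval_nonneg (n : ℕ) : 0 ≤ Fval p q n₀ n := by
  rw [Fval]; split <;> norm_num

lemma Fval_le_one (n : ℕ) : Fval p q n₀ n ≤ 1 := by
  rw [Fval]; split <;> norm_num

include hm in
lemma Fval_of_inE {n : ℕ} (hn : inE n₀ n) : Fval p q n₀ n = 1 := by
  rw [Fval, if_pos (Pfun_q_of_inE hm hn)]

include hm hpos in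
lemma Fval_of_not_inE {n : ℕ} (hn₀ : n₀ ≤ n) (hn : ¬ inE n₀ n) : Fval p q n₀ n = 0 := by
  rw [Fval, if_neg]
  rw [Pfun_q_of_not_inE hm hpos hn₀ hn]
  intro hx
  rw [Prod.mk.injEq] at hx
  exact absurd hx.2 (by norm_num)

end F

end SFC

open SFC in
/-- The infinite-measure construction underlying Theorem 1: a σ-finite measure space, an
automorphism `𝐒` and a conjugate `𝐓 = 𝐏 ∘ 𝐒 ∘ 𝐏⁻¹` whose averaged correlations over the sets
`𝐒^{p(n)} A ∩ 𝐓^{q(n)} A` tend to `μ(A)` along even scales and to `0` along odd scales. -/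
theorem sigma_finite_construction (p q : ℕ → ℕ)
    (hp : Tendsto (fun n => (p (n + 1) : ℤ) - (p n : ℤ)) atTop atTop)
    (hq : Tendsto (fun n => (q (n + 1) : ℤ) - (q n : ℤ)) atTop atTop) :
    ∃ (X : Type) (_ : MeasurableSpace X) (μ : Measure X), SigmaFinite μ ∧
      ∃ (S P : X ≃ᵐ X), MeasurePreserving S μ μ ∧ MeasurePreserving P μ μ ∧
        ∃ A : Set X, MeasurableSet A ∧ 0 < μ A ∧ μ A < ⊤ ∧
          ∃ N : ℕ → ℕ, StrictMono N ∧ (∀ j, 0 < N j) ∧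
            Tendsto (fun j : ℕ => (N j : ℝ) / (N (j + 1) : ℝ)) atTop (𝓝 0) ∧
            Tendsto
              (fun k : ℕ => (1 / (N (2 * k) : ℝ)) *
                ∑ n ∈ Finset.Icc 1 (N (2 * k)),
                  (μ ((⇑S)^[p n] '' A ∩ (⇑(P.symm.trans (S.trans P)))^[q n] '' A)).toReal)
              atTop (𝓝 ((μ A).toReal)) ∧
            Tendsto
              (fun k : ℕ => (1 / (N (2 * k + 1) : ℝ)) *
                ∑ n ∈ Finset.Icc 1 (N (2 * k + 1)),
                  (μ ((⇑S)^[p n] '' A ∩ (⇑(P.symm.trans (S.trans P)))^[q n] '' A)).toReal)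
              atTop (𝓝 0) := by
  classical
  -- Step 1: find `n₀` past which `p` and `q` are strictly increasing and positive.
  obtain ⟨m₁, hm₁⟩ := eventually_atTop.1 (hp.eventually_ge_atTop 1)
  obtain ⟨m₂, hm₂⟩ := eventually_atTop.1 (hq.eventually_ge_atTop 1)
  set m := max m₁ m₂ with hmdef
  have hstep : ∀ n, m ≤ n → p n < p (n + 1) ∧ q n < q (n + 1) := by
    intro n hn
    have h1 := hm₁ n (le_trans (le_max_left _ _) hn)
    have h2 := hm₂ n (le_trans (le_max_right _ _) hn)
    omega
  have hmono : ∀ a b, m ≤ a → a < b → p a < p b ∧ q a < q b := by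
    intro a b ha
    induction b with
    | zero => omega
    | succ b ih =>
      intro hab
      rcases Nat.lt_or_ge a b with h | h
      · obtain ⟨h1, h2⟩ := ih h
        obtain ⟨h3, h4⟩ := hstep b (by omega)
        exact ⟨h1.trans h3, h2.trans h4⟩
      · have hab' : a = b := by omega
        subst hab'
        exact hstep a ha
  set n₀ := m + 1 with hn₀def
  have hm' : ∀ a b, n₀ ≤ a → a < b → p a < p b ∧ q a < q b :=
    fun a b ha h => hmono a b (by omega) h
  have hpos : ∀ n, n₀ ≤ n → 1 ≤ p n ∧ 1 ≤ q n := by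
    intro n hn
    have := hmono m n le_rfl (by omega)
    omega
  -- Step 2: the space, the maps, the set.
  refine ⟨ℤ × ℤ, inferInstance, Measure.count, count_sigmaFinite, ?_⟩
  refine ⟨{ toEquiv := Equiv.prodCongr (Equiv.addRight (1 : ℤ)) (Equiv.refl ℤ),
            measurable_toFun := measurable_of_countable _,
            measurable_invFun := measurable_of_countable _ },
          { toEquiv := ⟨Pfun p q n₀, Pfun p q n₀,
              fun x => Pfun_invol hm' hpos x, fun x => Pfun_invol hm' hpos x⟩,
            measurable_toFun := measurable_of_countable _,
            measurable_invFun := measurable_of_countable _ }, ?_⟩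
  set S : (ℤ × ℤ) ≃ᵐ (ℤ × ℤ) :=
    { toEquiv := Equiv.prodCongr (Equiv.addRight (1 : ℤ)) (Equiv.refl ℤ),
      measurable_toFun := measurable_of_countable _,
      measurable_invFun := measurable_of_countable _ } with hSdef
  set P : (ℤ × ℤ) ≃ᵐ (ℤ × ℤ) :=
    { toEquiv := ⟨Pfun p q n₀, Pfun p q n₀,
        fun x => Pfun_invol hm' hpos x, fun x => Pfun_invol hm' hpos x⟩,
      measurable_toFun := measurable_of_countable _,
      measurable_invFun := measurable_of_countable _ } with hPdef
  refine ⟨count_preserving S, count_preserving P,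
    ({((0 : ℤ), (0 : ℤ))} : Set (ℤ × ℤ)), measurableSet_singleton _, ?_, ?_, ?_⟩
  · simp [Measure.count_singleton]
  · simp [Measure.count_singleton]
  -- Iteration formulas.
  have hSk : ∀ (k : ℕ) (x : ℤ × ℤ), (⇑S)^[k] x = (x.1 + k, x.2) := by
    intro k
    induction k with
    | zero => intro x; simp
    | succ k ih =>
      intro x
      rw [Function.iterate_succ_apply', ih]
      show ((x.1 + k) + 1, x.2) = (x.1 + ((k : ℕ) + 1 : ℕ), x.2)
      rw [Prod.mk.injEq]
      refine ⟨by push_cast; ring, rfl⟩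
  have hPP : ∀ x, Pfun p q n₀ (Pfun p q n₀ x) = x := Pfun_invol hm' hpos
  have hTk : ∀ (k : ℕ) (x : ℤ × ℤ),
      (⇑(P.symm.trans (S.trans P)))^[k] x = Pfun p q n₀ ((⇑S)^[k] (Pfun p q n₀ x)) := by
    intro k
    induction k with
    | zero => intro x; simp [hPP]
    | succ k ih =>
      intro x
      rw [Function.iterate_succ_apply', ih, Function.iterate_succ_apply']
      show Pfun p q n₀ (S (Pfun p q n₀ (Pfun p q n₀ ((⇑S)^[k] (Pfun p q n₀ x)))))
          = Pfun p q n₀ (S ((⇑S)^[k] (Pfun p q n₀ x)))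
      rw [hPP]
  -- The value of each correlation term.
  have key : ∀ n : ℕ,
      (Measure.count ((⇑S)^[p n] '' ({((0:ℤ),(0:ℤ))} : Set (ℤ×ℤ)) ∩
        (⇑(P.symm.trans (S.trans P)))^[q n] '' ({((0:ℤ),(0:ℤ))} : Set (ℤ×ℤ)))).toReal
        = Fval p q n₀ n := by
    intro n
    have h1 : (⇑S)^[p n] '' ({((0:ℤ),(0:ℤ))} : Set (ℤ×ℤ)) = {((p n : ℤ), 0)} := by
      rw [Set.image_singleton, hSk]
      norm_num
    have h2 : (⇑(P.symm.trans (S.trans P)))^[q n] '' ({((0:ℤ),(0:ℤ))} : Set (ℤ×ℤ))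
        = {Pfun p q n₀ ((q n : ℤ), 1)} := by
      rw [Set.image_singleton, hTk, Pfun_zero_zero hpos, hSk]
      norm_num
    rw [h1, h2, Fval]
    by_cases hc : Pfun p q n₀ ((q n : ℤ), 1) = ((p n : ℤ), 0)
    · rw [if_pos hc, hc, Set.inter_self]
      simp [Measure.count_singleton]
    · rw [if_neg hc]
      have hvoid : ({((p n : ℤ), 0)} : Set (ℤ×ℤ)) ∩ {Pfun p q n₀ ((q n : ℤ), 1)} = ∅ := by
        rw [Set.singleton_inter_eq_empty]
        simpa [eq_comm] using hc
      rw [hvoid]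
      simp
  -- Sum estimates.
  have sum_nonneg : ∀ M : ℕ, 0 ≤ ∑ n ∈ Finset.Icc 1 M, Fval p q n₀ n :=
    fun M => Finset.sum_nonneg fun n _ => Fval_nonneg n
  have sum_le : ∀ M : ℕ, (∑ n ∈ Finset.Icc 1 M, Fval p q n₀ n) ≤ (M : ℝ) := by
    intro M
    calc ∑ n ∈ Finset.Icc 1 M, Fval p q n₀ n ≤ ∑ n ∈ Finset.Icc 1 M, (1 : ℝ) :=
          Finset.sum_le_sum fun n _ => Fval_le_one n
      _ = (M : ℝ) := by simp [Nat.card_Icc]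
  have even_lb : ∀ k : ℕ, 1 ≤ k →
      ((Nseq n₀ (2*k) : ℝ) - (Nseq n₀ (2*k-1) : ℝ))
        ≤ ∑ n ∈ Finset.Icc 1 (Nseq n₀ (2*k)), Fval p q n₀ n := by
    intro k hk
    have hle : Nseq n₀ (2*k-1) ≤ Nseq n₀ (2*k) :=
      (Nseq_strictMono n₀).monotone (by omega)
    have hsub : Finset.Ioc (Nseq n₀ (2*k-1)) (Nseq n₀ (2*k)) ⊆
        Finset.Icc 1 (Nseq n₀ (2*k)) := by
      intro n hn
      rw [Finset.mem_Ioc] at hn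
      rw [Finset.mem_Icc]
      omega
    have hF1 : ∀ n ∈ Finset.Ioc (Nseq n₀ (2*k-1)) (Nseq n₀ (2*k)), Fval p q n₀ n = 1 := by
      intro n hn
      rw [Finset.mem_Ioc] at hn
      refine Fval_of_inE hm' ⟨k - 1, ?_⟩
      have e1 : 2*(k-1)+1 = 2*k-1 := by omega
      have e2 : 2*(k-1)+2 = 2*k := by omega
      rw [e1, e2]
      exact hn
    calc (Nseq n₀ (2*k) : ℝ) - (Nseq n₀ (2*k-1) : ℝ)
        = ∑ n ∈ Finset.Ioc (Nseq n₀ (2*k-1)) (Nseq n₀ (2*k)), Fval p q n₀ n := by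
          rw [Finset.sum_congr rfl hF1, Finset.sum_const, Nat.card_Ioc, nsmul_eq_mul,
            mul_one, Nat.cast_sub hle]
      _ ≤ _ := Finset.sum_le_sum_of_subset_of_nonneg hsub fun n _ _ => Fval_nonneg n
  have odd_ub : ∀ k : ℕ,
      (∑ n ∈ Finset.Icc 1 (Nseq n₀ (2*k+1)), Fval p q n₀ n) ≤ (Nseq n₀ (2*k) : ℝ) := by
    intro k
    have hab : Nseq n₀ (2*k) ≤ Nseq n₀ (2*k+1) := (Nseq_strictMono n₀).monotone (by omega)
    have e1 : Finset.Icc 1 (Nseq n₀ (2*k+1)) = Finset.Ioc 0 (Nseq n₀ (2*k+1)) :=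
      Finset.Icc_add_one_left_eq_Ioc 0 _
    have e0 : Finset.Icc 1 (Nseq n₀ (2*k)) = Finset.Ioc 0 (Nseq n₀ (2*k)) :=
      Finset.Icc_add_one_left_eq_Ioc 0 _
    have hsplit := Finset.sum_Ioc_consecutive (fun n => Fval p q n₀ n)
      (Nat.zero_le (Nseq n₀ (2*k))) hab
    have hF0 : ∀ n ∈ Finset.Ioc (Nseq n₀ (2*k)) (Nseq n₀ (2*k+1)), Fval p q n₀ n = 0 := by
      intro n hn
      rw [Finset.mem_Ioc] at hn
      have hge := Nseq_ge n₀ (2*k)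
      have hnn₀ : n₀ ≤ n := by omega
      refine Fval_of_not_inE hm' hpos hnn₀ ?_
      rintro ⟨j, hj1, hj2⟩
      rcases le_or_gt (2*j+2) (2*k) with h | h
      · have := (Nseq_strictMono n₀).monotone h
        omega
      · have h21 : 2*k+1 ≤ 2*j+1 := by omega
        have := (Nseq_strictMono n₀).monotone h21
        omega
    have hz : ∑ n ∈ Finset.Ioc (Nseq n₀ (2*k)) (Nseq n₀ (2*k+1)), Fval p q n₀ n = 0 :=
      Finset.sum_eq_zero hF0
    rw [e1, ← hsplit, hz, add_zero, ← e0]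
    exact sum_le _
  -- Step 3: the sequence N and the limits.
  refine ⟨Nseq n₀, Nseq_strictMono n₀, Nseq_pos n₀, ?_, ?_, ?_⟩
  · -- ratio tends to 0
    have heq : ∀ j : ℕ, (Nseq n₀ j : ℝ) / (Nseq n₀ (j + 1) : ℝ) = 1 / ((j : ℝ) + 2) := by
      intro j
      have ha : (0 : ℝ) < (Nseq n₀ j : ℝ) := by exact_mod_cast Nseq_pos n₀ j
      rw [Nseq_succ]
      push_cast
      rw [mul_comm]
      rw [div_mul_eq_div_div]
      rw [div_self ha.ne']
    have hts : Tendsto (fun j : ℕ => 1 / ((j : ℝ) + 2)) atTop (𝓝 0) := by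
      simp only [one_div]
      exact tendsto_inv_atTop_zero.comp
        (tendsto_atTop_add_const_right _ 2 tendsto_natCast_atTop_atTop)
    exact hts.congr (fun j => (heq j).symm)
  · -- even scales
    have hμA : (Measure.count ({((0:ℤ),(0:ℤ))} : Set (ℤ×ℤ))).toReal = 1 := by
      simp [Measure.count_singleton]
    rw [hμA]
    simp only [key]
    have hsmall : Tendsto (fun k : ℕ => 1 / (2*(k:ℝ)+1)) atTop (𝓝 0) := by
      simp only [one_div]
      apply tendsto_inv_atTop_zero.comp
      apply tendsto_atTop_add_const_right
      exact Tendsto.const_mul_atTop (by norm_num) tendsto_natCast_atTop_atTop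
    have hg : Tendsto (fun k : ℕ => 1 - 1/(2*(k:ℝ)+1)) atTop (𝓝 1) := by
      simpa using (tendsto_const_nhds (x := (1:ℝ)) (f := atTop)).sub hsmall
    refine tendsto_of_tendsto_of_tendsto_of_le_of_le' hg tendsto_const_nhds ?_ ?_
    · refine eventually_atTop.2 ⟨1, fun k hk => ?_⟩
      have hM : (0:ℝ) < (Nseq n₀ (2*k) : ℝ) := by exact_mod_cast Nseq_pos n₀ (2*k)
      have ha : (0:ℝ) < (Nseq n₀ (2*k-1) : ℝ) := by exact_mod_cast Nseq_pos n₀ (2*k-1)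
      have hnat : Nseq n₀ (2*k) = (2*k+1) * Nseq n₀ (2*k-1) := by
        conv_lhs => rw [show 2*k = (2*k-1)+1 by omega, Nseq_succ]
        congr 1
        omega
      have hMa : (Nseq n₀ (2*k) : ℝ) = (2*(k:ℝ)+1) * (Nseq n₀ (2*k-1) : ℝ) := by
        exact_mod_cast hnat
      have heq : 1 - 1/(2*(k:ℝ)+1)
          = ((Nseq n₀ (2*k) : ℝ) - (Nseq n₀ (2*k-1) : ℝ)) / (Nseq n₀ (2*k) : ℝ) := by
        rw [hMa]
        have h2k : (0:ℝ) < 2*(k:ℝ)+1 := by positivity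
        field_simp
      rw [heq, one_div, inv_mul_eq_div]
      exact (div_le_div_iff_of_pos_right hM).2 (even_lb k hk)
    · refine Eventually.of_forall fun k => ?_
      have hM : (0:ℝ) < (Nseq n₀ (2*k) : ℝ) := by exact_mod_cast Nseq_pos n₀ (2*k)
      rw [one_div, inv_mul_eq_div, div_le_one hM]
      exact sum_le _
  · -- odd scales
    simp only [key]
    have hsmall : Tendsto (fun k : ℕ => 1 / (2*(k:ℝ)+2)) atTop (𝓝 0) := by
      simp only [one_div]
      apply tendsto_inv_atTop_zero.comp
      apply tendsto_atTop_add_const_right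
      exact Tendsto.const_mul_atTop (by norm_num) tendsto_natCast_atTop_atTop
    refine tendsto_of_tendsto_of_tendsto_of_le_of_le' tendsto_const_nhds hsmall ?_ ?_
    · refine Eventually.of_forall fun k => ?_
      have hM : (0:ℝ) ≤ (Nseq n₀ (2*k+1) : ℝ) := by positivity
      exact mul_nonneg (by positivity) (sum_nonneg _)
    · refine Eventually.of_forall fun k => ?_
      have hM : (0:ℝ) < (Nseq n₀ (2*k+1) : ℝ) := by exact_mod_cast Nseq_pos n₀ (2*k+1)
      have ha : (0:ℝ) < (Nseq n₀ (2*k) : ℝ) := by exact_mod_cast Nseq_pos n₀ (2*k)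
      have hMa : (Nseq n₀ (2*k+1) : ℝ) = (2*(k:ℝ)+2) * (Nseq n₀ (2*k) : ℝ) := by
        exact_mod_cast Nseq_succ n₀ (2*k)
      have heq : (Nseq n₀ (2*k) : ℝ) / (Nseq n₀ (2*k+1) : ℝ) = 1/(2*(k:ℝ)+2) := by
        rw [hMa]
        have h2k : (0:ℝ) < 2*(k:ℝ)+2 := by positivity
        field_simp
      rw [one_div, inv_mul_eq_div, ← heq]
      exact (div_le_div_iff_of_pos_right hM).2 (odd_ub k)
end

section
/- Let (X, μ) be a probability space, let T and R be invertible measure-preserving transformations of (X, μ), and set S = R⁻¹ ∘ T ∘ R. Let D ⊆ X be a measurable set such that μ((T^{-n}(R(T^n D))) Δ D) → 0 as n → ∞. Then μ(S^n D ∩ T^n D) → μ(R D ∩ D) as n → ∞. In particular, if μ(R D ∩ D) = 0, then μ(S^n D ∩ T^n D) → 0. -/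
open MeasureTheory Filter Topology

private lemma conj_iterate {X : Type*} [MeasurableSpace X] (T R : X ≃ᵐ X) (n : ℕ) :
    (⇑(R.trans (T.trans R.symm)))^[n] = ⇑R.symm ∘ (⇑T)^[n] ∘ ⇑R := by
  induction n with
  | zero => funext x; simp
  | succ n ih =>
      funext x
      simp only [Function.iterate_succ', Function.comp_apply, ih]
      simp [Function.iterate_succ_apply']

private lemma abs_measure_inter_sub_le {X : Type*} [MeasurableSpace X] (μ : Measure X)
    [IsProbabilityMeasure μ] (A B C : Set X) :
    |(μ (A ∩ B)).toReal - (μ (A ∩ C)).toReal| ≤ (μ (symmDiff B C)).toReal := by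
  have key : ∀ B' C' : Set X, (μ (A ∩ B')).toReal - (μ (A ∩ C')).toReal
      ≤ (μ (symmDiff B' C')).toReal := by
    intro B' C'
    have hsub : A ∩ B' ⊆ (A ∩ C') ∪ symmDiff B' C' := by
      intro x hx
      by_cases hc : x ∈ C'
      · exact Or.inl ⟨hx.1, hc⟩
      · exact Or.inr (Or.inl ⟨hx.2, hc⟩)
    have h1 : μ (A ∩ B') ≤ μ (A ∩ C') + μ (symmDiff B' C') :=
      (measure_mono hsub).trans (measure_union_le _ _)
    have h2 : (μ (A ∩ B')).toReal ≤ (μ (A ∩ C')).toReal + (μ (symmDiff B' C')).toReal := by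
      rw [← ENNReal.toReal_add (measure_ne_top μ _) (measure_ne_top μ _)]
      exact ENNReal.toReal_mono (by simp [ENNReal.add_ne_top, measure_ne_top]) h1
    linarith
  rw [abs_sub_le_iff]
  refine ⟨key B C, ?_⟩
  have := key C B
  rwa [symmDiff_comm] at this

/-- If `R` is homoclinic for `T` on `D`, i.e. `μ((T^{-n} R T^n D) Δ D) → 0`, then for
`S = R⁻¹ ∘ T ∘ R` the joint correlations satisfy `μ(S^n D ∩ T^n D) → μ(R D ∩ D)`; in
particular, if `μ(R D ∩ D) = 0` then `μ(S^n D ∩ T^n D) → 0`. -/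
theorem homoclinic_correlation_limit {X : Type*} [MeasurableSpace X] (μ : Measure X)
    [IsProbabilityMeasure μ] (T R : X ≃ᵐ X)
    (hT : MeasurePreserving T μ μ) (hR : MeasurePreserving R μ μ)
    (D : Set X) (hD : MeasurableSet D)
    (hhom : Tendsto
      (fun n : ℕ => (μ (symmDiff ((⇑T.symm)^[n] '' (⇑R '' ((⇑T)^[n] '' D))) D)).toReal)
      atTop (𝓝 0)) :
    Tendsto
      (fun n : ℕ => (μ ((⇑(R.trans (T.trans R.symm)))^[n] '' D ∩ (⇑T)^[n] '' D)).toReal)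
      atTop (𝓝 ((μ (⇑R '' D ∩ D)).toReal)) ∧
    (μ (⇑R '' D ∩ D) = 0 →
      Tendsto
        (fun n : ℕ => (μ ((⇑(R.trans (T.trans R.symm)))^[n] '' D ∩ (⇑T)^[n] '' D)).toReal)
        atTop (𝓝 0)) := by
  -- notation
  set E : ℕ → Set X := fun n => (⇑T.symm)^[n] '' (⇑R '' ((⇑T)^[n] '' D)) with hE
  have hTsymm : MeasurePreserving (⇑T.symm) μ μ := MeasurePreserving.symm T hT
  -- measure identity
  have hmeas : ∀ n : ℕ,
      μ ((⇑(R.trans (T.trans R.symm)))^[n] '' D ∩ (⇑T)^[n] '' D)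
        = μ (⇑R '' D ∩ E n) := by
    intro n
    have hTn : Function.Injective ((⇑T)^[n]) := (T.injective).iterate n
    have hTsn : Function.Injective ((⇑T.symm)^[n]) := (T.symm.injective).iterate n
    -- step 0 : rewrite the conjugate iterate
    rw [conj_iterate]
    have himg : (⇑R.symm ∘ (⇑T)^[n] ∘ ⇑R) '' D = ⇑R.symm '' ((⇑T)^[n] '' (⇑R '' D)) := by
      rw [Set.image_comp, Set.image_comp]
    rw [himg]
    -- step 1 : pull back by R
    have h1 : ⇑R.symm '' ((⇑T)^[n] '' (⇑R '' D)) ∩ (⇑T)^[n] '' D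
        = ⇑R ⁻¹' ((⇑T)^[n] '' (⇑R '' D) ∩ ⇑R '' ((⇑T)^[n] '' D)) := by
      rw [Set.preimage_inter]
      congr 1
      · rw [← MeasurableEquiv.image_symm]
      · rw [Set.preimage_image_eq _ R.injective]
    -- measurability helpers: images under equiv iterates are measurable
    have mImg : ∀ (m : Set X), MeasurableSet m → MeasurableSet ((⇑T)^[n] '' m) := by
      intro m hm
      have : (⇑T)^[n] '' m = (⇑T.symm)^[n] ⁻¹' m := by
        ext x
        constructor
        · rintro ⟨y, hy, rfl⟩
          simpa [T.symm.leftInverse_symm, Function.LeftInverse.iterate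
            (fun z => T.symm_apply_apply z) n, Function.iterate_fixed] using
            (by
              have : (⇑T.symm)^[n] ((⇑T)^[n] y) = y := by
                have h := Function.LeftInverse.iterate
                  (g := ⇑T.symm) (f := ⇑T) (fun z => T.symm_apply_apply z) n
                exact h y
              simpa [this] using hy)
        · intro hx
          exact ⟨(⇑T.symm)^[n] x, hx, by
            have h := Function.RightInverse.iterate
              (g := ⇑T.symm) (f := ⇑T) (fun z => T.apply_symm_apply z) n
            exact h x⟩
      rw [this]
      exact ((T.symm.measurable).iterate n) hm
    have mImgR : MeasurableSet (⇑R '' D) := R.measurableSet_image.mpr hD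
    -- step 2 : pull back by (T.symm)^[n]
    have hprev : ∀ (C : Set X), (⇑T)^[n] '' C = (⇑T.symm)^[n] ⁻¹' C := by
      intro C
      ext x
      constructor
      · rintro ⟨y, hy, rfl⟩
        have h := Function.LeftInverse.iterate
          (g := ⇑T.symm) (f := ⇑T) (fun z => T.symm_apply_apply z) n
        simpa [h y] using hy
      · intro hx
        exact ⟨(⇑T.symm)^[n] x, hx, by
          have h := Function.RightInverse.iterate
            (g := ⇑T.symm) (f := ⇑T) (fun z => T.apply_symm_apply z) n
          exact h x⟩
    have h2 : (⇑T)^[n] '' (⇑R '' D) ∩ ⇑R '' ((⇑T)^[n] '' D)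
        = (⇑T.symm)^[n] ⁻¹' (⇑R '' D ∩ E n) := by
      rw [Set.preimage_inter, ← hprev]
      congr 1
      rw [hE]
      simp only
      rw [Set.preimage_image_eq _ hTsn]
    -- measurability of the final set
    have mEn : MeasurableSet (⇑R '' D ∩ E n) := by
      refine mImgR.inter ?_
      have : MeasurableSet (⇑R '' ((⇑T)^[n] '' D)) :=
        R.measurableSet_image.mpr (mImg D hD)
      have hTs : (⇑T.symm)^[n] '' (⇑R '' ((⇑T)^[n] '' D))
          = (⇑T)^[n] ⁻¹' (⇑R '' ((⇑T)^[n] '' D)) := by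
        ext x
        constructor
        · rintro ⟨y, hy, rfl⟩
          have h := Function.RightInverse.iterate
            (g := ⇑T.symm) (f := ⇑T) (fun z => T.apply_symm_apply z) n
          simpa [h y] using hy
        · intro hx
          exact ⟨(⇑T)^[n] x, hx, by
            have h := Function.LeftInverse.iterate
              (g := ⇑T.symm) (f := ⇑T) (fun z => T.symm_apply_apply z) n
            exact h x⟩
      rw [hE]; simp only; rw [hTs]
      exact ((T.measurable).iterate n) this
    have mMid : MeasurableSet ((⇑T)^[n] '' (⇑R '' D) ∩ ⇑R '' ((⇑T)^[n] '' D)) := by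
      refine (mImg _ mImgR).inter (R.measurableSet_image.mpr (mImg D hD))
    calc μ (⇑R.symm '' ((⇑T)^[n] '' (⇑R '' D)) ∩ (⇑T)^[n] '' D)
        = μ (⇑R ⁻¹' ((⇑T)^[n] '' (⇑R '' D) ∩ ⇑R '' ((⇑T)^[n] '' D))) := by rw [h1]
      _ = μ ((⇑T)^[n] '' (⇑R '' D) ∩ ⇑R '' ((⇑T)^[n] '' D)) := hR.measure_preimage mMid.nullMeasurableSet
      _ = μ ((⇑T.symm)^[n] ⁻¹' (⇑R '' D ∩ E n)) := by rw [h2]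
      _ = μ (⇑R '' D ∩ E n) := (hTsymm.iterate n).measure_preimage mEn.nullMeasurableSet
  -- analysis part
  have hbound : ∀ n : ℕ,
      |(μ ((⇑(R.trans (T.trans R.symm)))^[n] '' D ∩ (⇑T)^[n] '' D)).toReal
        - (μ (⇑R '' D ∩ D)).toReal|
      ≤ (μ (symmDiff (E n) D)).toReal := by
    intro n
    rw [hmeas n]
    exact abs_measure_inter_sub_le μ (⇑R '' D) (E n) D
  have hmain : Tendsto
      (fun n : ℕ => (μ ((⇑(R.trans (T.trans R.symm)))^[n] '' D ∩ (⇑T)^[n] '' D)).toReal)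
      atTop (𝓝 ((μ (⇑R '' D ∩ D)).toReal)) := by
    have hz : Tendsto
        (fun n : ℕ => (μ ((⇑(R.trans (T.trans R.symm)))^[n] '' D ∩ (⇑T)^[n] '' D)).toReal
          - (μ (⇑R '' D ∩ D)).toReal) atTop (𝓝 0) := by
      apply squeeze_zero_norm (fun n => ?_) hhom
      simpa [Real.norm_eq_abs] using hbound n
    have := hz.add_const ((μ (⇑R '' D ∩ D)).toReal)
    simpa using this
  refine ⟨hmain, fun h0 => ?_⟩
  rw [h0] at hmain
  simpa using hmain
end

section
/- Let (X, μ) be a probability space, let S and T be invertible measure-preserving transformations of (X, μ), and let D ⊆ X be measurable with Σ_{n=1}^{∞} μ(S^n D ∩ T^n D) < μ(D). Then there exists a measurable set D' ⊆ D with μ(D') > 0 such that S^n D' ∩ T^n D' = ∅ for every n ≥ 1. -/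
open MeasureTheory

lemma iter_image_eq_preimage {X : Type*} [MeasurableSpace X] (e : X ≃ᵐ X) (k : ℕ)
    (B : Set X) : (⇑e)^[k] '' B = (⇑e.symm)^[k] ⁻¹' B := by
  have hL : Function.LeftInverse ((⇑e.symm)^[k]) ((⇑e)^[k]) :=
    Function.LeftInverse.iterate e.symm_apply_apply k
  have hR : Function.RightInverse ((⇑e.symm)^[k]) ((⇑e)^[k]) :=
    Function.LeftInverse.iterate e.apply_symm_apply k
  ext x
  constructor
  · rintro ⟨b, hb, rfl⟩
    simpa [Set.mem_preimage, hL b] using hb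
  · intro hx
    exact ⟨(⇑e.symm)^[k] x, hx, hR x⟩

/-- The extraction lemma: if the total joint recurrence `Σ_{n≥1} μ(S^n D ∩ T^n D)` of `D`
under the pair `(S, T)` is smaller than `μ(D)`, then some positive-measure subset of `D` is
never jointly recurrent. -/
theorem extraction_lemma {X : Type*} [MeasurableSpace X] (μ : Measure X)
    [IsProbabilityMeasure μ] (S T : X ≃ᵐ X)
    (hS : MeasurePreserving S μ μ) (hT : MeasurePreserving T μ μ)
    (D : Set X) (hD : MeasurableSet D)
    (hsum : ∑' n : ℕ, μ ((⇑S)^[n + 1] '' D ∩ (⇑T)^[n + 1] '' D) < μ D) :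
    ∃ D' : Set X, D' ⊆ D ∧ MeasurableSet D' ∧ 0 < μ D' ∧
      ∀ n : ℕ, 1 ≤ n → (⇑S)^[n] '' D' ∩ (⇑T)^[n] '' D' = ∅ := by
  set f : ℕ → Set X := fun n => (⇑S)^[n + 1] ⁻¹' ((⇑T)^[n + 1] '' D) with hf
  set D' : Set X := D \ ⋃ n, f n with hD'
  have hTimg : ∀ k, MeasurableSet ((⇑T)^[k] '' D) := by
    intro k
    rw [iter_image_eq_preimage]
    exact (hT.symm T).iterate k |>.measurable hD
  have hSimg : ∀ k, MeasurableSet ((⇑S)^[k] '' D) := by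
    intro k
    rw [iter_image_eq_preimage]
    exact (hS.symm S).iterate k |>.measurable hD
  have hfmeas : ∀ n, MeasurableSet (f n) := fun n =>
    (hS.iterate (n + 1)).measurable (hTimg (n + 1))
  have hmeasD' : MeasurableSet D' := hD.diff (MeasurableSet.iUnion hfmeas)
  -- key measure identity
  have hmeq : ∀ n : ℕ, μ (D ∩ f n) = μ ((⇑S)^[n + 1] '' D ∩ (⇑T)^[n + 1] '' D) := by
    intro n
    have hinj : Function.Injective ((⇑S)^[n + 1]) :=
      Function.Injective.iterate S.injective (n + 1)
    have himg : (⇑S)^[n + 1] '' (D ∩ f n) =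
        (⇑S)^[n + 1] '' D ∩ (⇑T)^[n + 1] '' D := by
      rw [hf]
      exact Set.image_inter_preimage _ _ _
    have hmp : MeasurePreserving ((⇑S.symm)^[n + 1]) μ μ := (hS.symm S).iterate (n + 1)
    have hBmeas : MeasurableSet ((⇑S)^[n + 1] '' D ∩ (⇑T)^[n + 1] '' D) :=
      (hSimg (n + 1)).inter (hTimg (n + 1))
    calc μ (D ∩ f n) = μ ((⇑S)^[n + 1] '' (D ∩ f n)) := by
          rw [iter_image_eq_preimage S (n + 1)]
          exact (hmp.measure_preimage ((hD.inter (hfmeas n)).nullMeasurableSet)).symm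
      _ = μ ((⇑S)^[n + 1] '' D ∩ (⇑T)^[n + 1] '' D) := by rw [himg]
  refine ⟨D', Set.diff_subset, hmeasD', ?_, ?_⟩
  · -- positivity
    by_contra h
    push_neg at h
    have hD'0 : μ D' = 0 := le_antisymm h zero_le
    have hsub : D ⊆ D' ∪ ⋃ n, D ∩ f n := by
      intro x hx
      by_cases hxU : x ∈ ⋃ n, f n
      · right
        obtain ⟨n, hn⟩ := Set.mem_iUnion.1 hxU
        exact Set.mem_iUnion.2 ⟨n, hx, hn⟩
      · left; exact ⟨hx, hxU⟩
    have : μ D ≤ μ D' + μ (⋃ n, D ∩ f n) :=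
      le_trans (measure_mono hsub) (measure_union_le _ _)
    rw [hD'0, zero_add] at this
    have hle : μ (⋃ n, D ∩ f n) ≤ ∑' n, μ (D ∩ f n) := measure_iUnion_le _
    have : μ D ≤ ∑' n, μ ((⇑S)^[n + 1] '' D ∩ (⇑T)^[n + 1] '' D) := by
      calc μ D ≤ ∑' n, μ (D ∩ f n) := le_trans this hle
        _ = _ := by exact tsum_congr hmeq
    exact absurd hsum (not_lt.2 this)
  · -- disjointness
    intro n hn
    obtain ⟨m, rfl⟩ := Nat.exists_eq_add_of_le hn
    rw [Set.eq_empty_iff_forall_notMem]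
    rintro x ⟨⟨a, ha, hax⟩, ⟨b, hb, hbx⟩⟩
    have haD : a ∈ D := ha.1
    have haf : a ∈ f m := by
      rw [hf]
      simp only [Set.mem_preimage]
      rw [Nat.add_comm 1 m] at hax hbx
      rw [hax, ← hbx]
      exact ⟨b, hb.1, rfl⟩
    exact ha.2 (Set.mem_iUnion.2 ⟨m, haf⟩)
end

section
/- Let (X, μ) be a probability space, let S and T be invertible measure-preserving transformations of (X, μ), and let D ⊆ X be measurable with μ(D) > 0 and Σ_{n=1}^{∞} μ(S^n D ∩ T^n D)^4 < ∞. Consider the product probability space (X⁴, μ^{⊗4}) with the product transformations S₄ = S × S × S × S and T₄ = T × T × T × T, and the set D₄ = D × D × D × D. Then there exist an integer p ≥ 1 and a measurable set D' ⊆ D₄ with μ^{⊗4}(D') > 0 such that (S₄)^{p·n} D' ∩ (T₄)^{p·n} D' = ∅ for every n ≥ 1. -/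
open MeasureTheory

private lemma iterate_pi_map {X : Type*} (S : X → X) (m : ℕ) :
    (fun x : Fin 4 → X => fun i => S (x i))^[m] = fun x i => S^[m] (x i) := by
  induction m with
  | zero => rfl
  | succ m ih =>
    funext x i
    rw [Function.iterate_succ_apply', ih]
    simp [Function.iterate_succ_apply']

private lemma iterate_image_measurable {X : Type*} [MeasurableSpace X] (S : X ≃ᵐ X)
    {D : Set X} (hD : MeasurableSet D) (m : ℕ) : MeasurableSet ((⇑S)^[m] '' D) := by
  induction m with
  | zero => simpa using hD
  | succ m ih =>
    rw [Function.iterate_succ', Set.image_comp, MeasurableEquiv.image_eq_preimage_symm]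
    exact S.symm.measurable ih

/-- If `Σ_{n≥1} μ(S^n D ∩ T^n D)^4 < ∞` and `μ(D) > 0`, then on the 4-fold product space
with the product transformations `S₄ = S×S×S×S`, `T₄ = T×T×T×T` and `D₄ = D×D×D×D`, there
are `p ≥ 1` and a positive-measure subset `D' ⊆ D₄` with `(S₄)^{pn} D' ∩ (T₄)^{pn} D' = ∅`
for all `n ≥ 1`. -/
theorem product_power_nonrecurrence {X : Type*} [MeasurableSpace X] (μ : Measure X)
    [IsProbabilityMeasure μ] (S T : X ≃ᵐ X)
    (hS : MeasurePreserving S μ μ) (hT : MeasurePreserving T μ μ)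
    (D : Set X) (hD : MeasurableSet D) (hDpos : 0 < μ D)
    (hsum : ∑' n : ℕ, (μ ((⇑S)^[n + 1] '' D ∩ (⇑T)^[n + 1] '' D)) ^ 4 < ⊤) :
    ∃ p : ℕ, 1 ≤ p ∧
      ∃ D' : Set (Fin 4 → X), D' ⊆ Set.univ.pi (fun _ => D) ∧ MeasurableSet D' ∧
        0 < Measure.pi (fun _ : Fin 4 => μ) D' ∧
        ∀ n : ℕ, 1 ≤ n →
          (fun x : Fin 4 → X => fun i => S (x i))^[p * n] '' D' ∩
            (fun x : Fin 4 → X => fun i => T (x i))^[p * n] '' D' = ∅ := by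
  classical
  set ν : Measure (Fin 4 → X) := Measure.pi (fun _ : Fin 4 => μ) with hν
  set F : (Fin 4 → X) → (Fin 4 → X) := fun x i => S (x i) with hF
  set G : (Fin 4 → X) → (Fin 4 → X) := fun x i => T (x i) with hG
  set D₄ : Set (Fin 4 → X) := Set.univ.pi (fun _ => D) with hD₄
  set b : ℕ → ENNReal := fun m => (μ ((⇑S)^[m] '' D ∩ (⇑T)^[m] '' D)) ^ 4 with hb
  -- images of the product set
  have hFim : ∀ m, F^[m] '' D₄ = Set.univ.pi (fun _ => (⇑S)^[m] '' D) := by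
    intro m
    rw [hF, iterate_pi_map]
    exact Set.piMap_image_univ_pi (fun _ => (⇑S)^[m]) (fun _ => D)
  have hGim : ∀ m, G^[m] '' D₄ = Set.univ.pi (fun _ => (⇑T)^[m] '' D) := by
    intro m
    rw [hG, iterate_pi_map]
    exact Set.piMap_image_univ_pi (fun _ => (⇑T)^[m]) (fun _ => D)
  -- key measure identity
  have key : ∀ m, ν (F^[m] '' D₄ ∩ G^[m] '' D₄) = b m := by
    intro m
    rw [hFim, hGim, ← Set.pi_inter_distrib, hν, Measure.pi_pi]
    simp [hb, Finset.prod_const]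
  have hD₄meas : MeasurableSet D₄ := MeasurableSet.univ_pi (fun _ => hD)
  have hAmeas : ∀ m, MeasurableSet (F^[m] '' D₄ ∩ G^[m] '' D₄) := by
    intro m
    rw [hFim, hGim, ← Set.pi_inter_distrib]
    exact MeasurableSet.univ_pi fun _ =>
      (iterate_image_measurable S hD m).inter (iterate_image_measurable T hD m)
  have hνD₄ : ν D₄ = (μ D) ^ 4 := by
    rw [hν, hD₄, Measure.pi_pi]; simp [Finset.prod_const]
  have hνD₄pos : 0 < ν D₄ := by
    rw [hνD₄]
    exact pos_iff_ne_zero.mpr (pow_ne_zero 4 hDpos.ne')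
  -- measure preserving product maps
  have hFmp : MeasurePreserving F ν ν := measurePreserving_pi _ _ (fun _ => hS)
  have hGmp : MeasurePreserving G ν ν := measurePreserving_pi _ _ (fun _ => hT)
  -- choose p with small tail
  have hsum' : (∑' n : ℕ, b (n + 1)) ≠ ⊤ := hsum.ne
  have htend := ENNReal.tendsto_sum_nat_add (fun n => b (n + 1)) hsum'
  have hev := htend.eventually_lt_const hνD₄pos
  obtain ⟨N, hN⟩ := hev.exists
  refine ⟨N + 1, Nat.le_add_left 1 N, ?_⟩
  set p := N + 1 with hp
  -- tail bound : ∑' n, b (p * (n+1)) ≤ ∑' k, b (k + N + 1)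
  have htail : (∑' n : ℕ, b (p * (n + 1))) ≤ ∑' k : ℕ, b (k + N + 1) := by
    have hinj : Function.Injective (fun n : ℕ => p * n) := fun a c h => by
      exact Nat.eq_of_mul_eq_mul_left (Nat.succ_pos N) h
    have := ENNReal.tsum_comp_le_tsum_of_injective hinj (fun k => b (k + N + 1))
    refine le_trans (le_of_eq (tsum_congr fun n => ?_)) this
    have harith : p * (n + 1) = p * n + N + 1 := by rw [hp]; ring
    rw [harith]
  have hsmall : (∑' n : ℕ, b (p * (n + 1))) < ν D₄ := lt_of_le_of_lt htail hN
  -- define the non-recurrent set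
  set U : Set (Fin 4 → X) :=
    ⋃ n : ℕ, (F^[p * (n + 1)]) ⁻¹' (F^[p * (n + 1)] '' D₄ ∩ G^[p * (n + 1)] '' D₄) with hU
  have hUmeas : MeasurableSet U :=
    MeasurableSet.iUnion fun n =>
      (hFmp.iterate (p * (n + 1))).measurable (hAmeas (p * (n + 1)))
  have hνU : ν U < ν D₄ := by
    calc ν U ≤ ∑' n : ℕ, ν ((F^[p * (n + 1)]) ⁻¹'
          (F^[p * (n + 1)] '' D₄ ∩ G^[p * (n + 1)] '' D₄)) := measure_iUnion_le _
      _ = ∑' n : ℕ, b (p * (n + 1)) := by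
          refine tsum_congr fun n => ?_
          rw [(hFmp.iterate (p * (n + 1))).measure_preimage
            (hAmeas (p * (n + 1))).nullMeasurableSet]
          exact key _
      _ < ν D₄ := hsmall
  refine ⟨D₄ \ U, Set.diff_subset, hD₄meas.diff hUmeas, ?_, ?_⟩
  · -- positive measure
    by_contra h0
    push_neg at h0
    have h0' : ν (D₄ \ U) = 0 := le_antisymm h0 zero_le
    have : ν D₄ ≤ ν (D₄ \ U) + ν U := by
      refine le_trans (measure_mono ?_) (measure_union_le _ _)
      intro x hx
      by_cases hxU : x ∈ U
      · exact Or.inr hxU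
      · exact Or.inl ⟨hx, hxU⟩
    rw [h0', zero_add] at this
    exact absurd (lt_of_le_of_lt this hνU) (lt_irrefl _)
  · -- non-recurrence
    intro n hn
    obtain ⟨k, rfl⟩ := Nat.exists_eq_add_of_le hn
    rw [add_comm 1 k, Set.eq_empty_iff_forall_notMem]
    rintro x ⟨⟨y, hy, rfl⟩, ⟨z, hz, hzx⟩⟩
    have hyU : y ∉ U := hy.2
    apply hyU
    refine Set.mem_iUnion.2 ⟨k, ?_⟩
    exact ⟨Set.mem_image_of_mem _ hy.1, by rw [← hzx]; exact Set.mem_image_of_mem _ hz.1⟩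
end

section
/- There exist a probability space (X, μ), invertible measure-preserving transformations S and T of (X, μ), and a measurable set D ⊆ X with μ(D) > 0 such that μ(S^n D ∩ T^n D) = 0 for every integer n ≥ 1. -/
open MeasureTheory TopologicalSpace

namespace LinNonrec

abbrev G : Type := ℤ → ZMod 2

/-- the shift, as a measurable equivalence -/
def shiftE : G ≃ᵐ G where
  toFun x i := x (i + 1)
  invFun x i := x (i - 1)
  left_inv x := by funext i; simp
  right_inv x := by funext i; simp
  measurable_toFun := measurable_pi_lambda _ fun i => measurable_pi_apply _
  measurable_invFun := measurable_pi_lambda _ fun i => measurable_pi_apply _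

/-- the delta at 0 -/
def d : G := fun i => if i = 0 then 1 else 0

/-- translation by `d`, as a measurable equivalence -/
def flipE : G ≃ᵐ G where
  toFun x := x + d
  invFun x := x + d
  left_inv x := by funext i; simp [CharTwo.add_self_eq_zero, add_assoc]
  right_inv x := by funext i; simp [CharTwo.add_self_eq_zero, add_assoc]
  measurable_toFun := measurable_pi_lambda _ fun i =>
    ((measurable_pi_apply i).add_const _)
  measurable_invFun := measurable_pi_lambda _ fun i =>
    ((measurable_pi_apply i).add_const _)

def SE : G ≃ᵐ G := flipE.trans shiftE

lemma shift_iter (n : ℕ) (x : G) (i : ℤ) : (⇑shiftE)^[n] x i = x (i + n) := by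
  induction n generalizing i with
  | zero => simp
  | succ n ih =>
    rw [Function.iterate_succ_apply']
    show (⇑shiftE)^[n] x (i + 1) = _
    rw [ih]
    congr 1
    push_cast
    ring

lemma S_iter (n : ℕ) (x : G) (i : ℤ) :
    (⇑SE)^[n] x i = x (i + n) + (if -(n:ℤ) ≤ i ∧ i < 0 then 1 else 0) := by
  induction n generalizing i with
  | zero => simp
  | succ n ih =>
    rw [Function.iterate_succ_apply']
    show ((⇑SE)^[n] x) (i + 1) + d (i + 1) = _
    rw [ih]
    have harg : i + 1 + (n:ℤ) = i + ((n+1 : ℕ):ℤ) := by push_cast; ring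
    rw [harg, add_assoc]
    congr 1
    simp only [d]
    split_ifs with h1 h2 <;> push_cast at * <;> first | rfl | omega

/-- the shift as an additive monoid hom -/
def shiftHom : G →+ G where
  toFun x i := x (i + 1)
  map_zero' := rfl
  map_add' _ _ := rfl

lemma shift_mp : MeasurePreserving (⇑shiftE) (Measure.addHaarMeasure ⊤) (Measure.addHaarMeasure ⊤) := by
  have h : IsProbabilityMeasure (Measure.addHaarMeasure (⊤ : PositiveCompacts G)) := by
    constructor
    rw [← PositiveCompacts.coe_top (α := G)]
    exact Measure.addHaarMeasure_self
  exact AddMonoidHom.measurePreserving (f := shiftHom)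
    (continuous_pi fun i => continuous_apply _) shiftE.surjective rfl

lemma flip_mp : MeasurePreserving (⇑flipE) (Measure.addHaarMeasure ⊤) (Measure.addHaarMeasure ⊤) := by
  have h := measurePreserving_add_left (Measure.addHaarMeasure (⊤ : PositiveCompacts G)) d
  have : ⇑flipE = (fun x : G => d + x) := by funext x; exact add_comm x d
  rw [this]; exact h

end LinNonrec

open LinNonrec

/-- Linear non-recurrence: there exist a probability space, invertible measure-preserving
transformations `S, T` and a measurable set `D` of positive measure such that
`μ(S^n D ∩ T^n D) = 0` for every `n ≥ 1`. -/
theorem linear_nonrecurrence :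
    ∃ (X : Type) (_ : MeasurableSpace X) (μ : Measure X), IsProbabilityMeasure μ ∧
      ∃ (S T : X ≃ᵐ X), MeasurePreserving S μ μ ∧ MeasurePreserving T μ μ ∧
        ∃ D : Set X, MeasurableSet D ∧ 0 < μ D ∧
          ∀ n : ℕ, 1 ≤ n → μ ((⇑S)^[n] '' D ∩ (⇑T)^[n] '' D) = 0 := by
  refine ⟨G, inferInstance, Measure.addHaarMeasure ⊤, ?_, SE, shiftE, ?_, ?_, {x | x 0 = 0}, ?_, ?_, ?_⟩
  · constructor
    rw [← PositiveCompacts.coe_top (α := G)]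
    exact Measure.addHaarMeasure_self
  · exact shift_mp.comp flip_mp
  · exact shift_mp
  · exact (measurable_pi_apply 0) (measurableSet_singleton 0)
  · have hopen : IsOpen {x : G | x 0 = 0} :=
      (continuous_apply 0).isOpen_preimage {0} (isOpen_discrete _)
    exact hopen.measure_pos _ ⟨0, rfl⟩
  · intro n hn
    have hemp : (⇑SE)^[n] '' {x : G | x 0 = 0} ∩ (⇑shiftE)^[n] '' {x : G | x 0 = 0} = ∅ := by
      rw [Set.eq_empty_iff_forall_notMem]
      rintro y ⟨⟨x, hx, rfl⟩, ⟨z, hz, hzy⟩⟩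
      have e1 : (⇑SE)^[n] x (-(n:ℤ)) = 1 := by
        rw [S_iter, show -(n:ℤ) + n = 0 by ring, if_pos ⟨le_rfl, by omega⟩,
          Set.mem_setOf_eq.mp hx, zero_add]
      have e2 : (⇑shiftE)^[n] z (-(n:ℤ)) = 0 := by
        rw [shift_iter, show -(n:ℤ) + n = 0 by ring]; exact hz
      rw [hzy] at e2
      exact one_ne_zero (e1.symm.trans e2)
    rw [hemp]
    exact measure_empty
end
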